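/- arXiv:math/0510040 — 4 statements merged into one kernel-verified Lean document; each statement's English description precedes it below -/
import Mathlib

section
/- Let C be a strict monoidal category and D_{U,V}: U⊗V → U⊗V a natural isomorphism satisfying D_{I,X} = D_{X,I} = id_X and the fused relation (D_{X,Y}⊗id_Z⊗id_T)(id_X⊗D_{Y⊗Z,T})(D_{X⊗Y,Z}⊗id_T) = (id_X⊗id_Y⊗D_{Z,T})(D_{X,Y⊗Z}⊗id_T)(id_X⊗D_{Y,Z⊗T}). Then D is a twine, i.e. (C, D) is an entwined category. -/
open CategoryTheory MonoidalCategory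

universe v u

/-- A monoidal category is strict when the associators and unitors are `eqToHom`s of
equalities of objects. -/
structure MonStrict (C : Type u) [Category.{v} C] [MonoidalCategory C] : Prop where
  assocObj : ∀ X Y Z : C, (X ⊗ Y) ⊗ Z = X ⊗ (Y ⊗ Z)
  lidObj : ∀ X : C, 𝟙_ C ⊗ X = X
  ridObj : ∀ X : C, X ⊗ 𝟙_ C = X
  assocHom : ∀ X Y Z : C, (α_ X Y Z).hom = eqToHom (assocObj X Y Z)
  lidHom : ∀ X : C, (λ_ X).hom = eqToHom (lidObj X)
  ridHom : ∀ X : C, (ρ_ X).hom = eqToHom (ridObj X)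

variable {C : Type u} [Category.{v} C] [MonoidalCategory C]

/-- Transport of an endomorphism along an equality of objects of a strict monoidal
category. -/
def cE {X Y : C} (h : X = Y) (f : Y ⟶ Y) : X ⟶ X := eqToHom h ≫ f ≫ eqToHom h.symm

/-- A pure-braided structure on a strict monoidal category: two families of natural
isomorphisms `A, B : U ⊗ V ⊗ W ≅ U ⊗ V ⊗ W` satisfying the pure-braided axioms. -/
structure PureBraided (C : Type u) [Category.{v} C] [MonoidalCategory C]
    (hS : MonStrict C) where
  A : ∀ U V W : C, U ⊗ (V ⊗ W) ≅ U ⊗ (V ⊗ W)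
  B : ∀ U V W : C, U ⊗ (V ⊗ W) ≅ U ⊗ (V ⊗ W)
  natA : ∀ {U V W U' V' W' : C} (f : U ⟶ U') (g : V ⟶ V') (h : W ⟶ W'),
    (f ⊗ₘ (g ⊗ₘ h)) ≫ (A U' V' W').hom = (A U V W).hom ≫ (f ⊗ₘ (g ⊗ₘ h))
  natB : ∀ {U V W U' V' W' : C} (f : U ⟶ U') (g : V ⟶ V') (h : W ⟶ W'),
    (f ⊗ₘ (g ⊗ₘ h)) ≫ (B U' V' W').hom = (B U V W).hom ≫ (f ⊗ₘ (g ⊗ₘ h))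
  /-- `A_{U⊗V,W,X} = A_{U,V⊗W,X}(id_U ⊗ A_{V,W,X})` -/
  a1 : ∀ U V W X : C, (A (U ⊗ V) W X).hom =
    cE (by simp [hS.assocObj]) ((𝟙 U ⊗ₘ (A V W X).hom) ≫
      cE (by simp [hS.assocObj]) (A U (V ⊗ W) X).hom)
  /-- `A_{U,V,W⊗X} = (A_{U,V,W} ⊗ id_X) A_{U,V⊗W,X}` -/
  a2 : ∀ U V W X : C, (A U V (W ⊗ X)).hom =
    cE (by simp [hS.assocObj]) ((cE (by simp [hS.assocObj]) (A U (V ⊗ W) X).hom) ≫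
      ((A U V W).hom ⊗ₘ 𝟙 X))
  /-- `B_{U⊗V,W,X} = (id_U ⊗ B_{V,W,X}) B_{U,V⊗W,X}` -/
  baba : ∀ U V W X : C, (B (U ⊗ V) W X).hom =
    cE (by simp [hS.assocObj]) ((cE (by simp [hS.assocObj]) (B U (V ⊗ W) X).hom) ≫
      (𝟙 U ⊗ₘ (B V W X).hom))
  /-- `B_{U,V,W⊗X} = B_{U,V⊗W,X}(B_{U,V,W} ⊗ id_X)` -/
  b2 : ∀ U V W X : C, (B U V (W ⊗ X)).hom =
    cE (by simp [hS.assocObj]) (((B U V W).hom ⊗ₘ 𝟙 X) ≫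
      cE (by simp [hS.assocObj]) (B U (V ⊗ W) X).hom)
  /-- `(A_{U,V,W} ⊗ id_X)(id_U ⊗ B_{V,W,X}) = (id_U ⊗ B_{V,W,X})(A_{U,V,W} ⊗ id_X)` -/
  cab : ∀ U V W X : C,
    cE (by simp [hS.assocObj]) (𝟙 U ⊗ₘ (B V W X).hom) ≫ ((A U V W).hom ⊗ₘ 𝟙 X)
    = ((A U V W).hom ⊗ₘ 𝟙 X) ≫ cE (by simp [hS.assocObj]) (𝟙 U ⊗ₘ (B V W X).hom)
  /-- `A_{U,I,V} = B_{U,I,V}` -/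
  t1t : ∀ U V : C, A U (𝟙_ C) V = B U (𝟙_ C) V

/-- A twine on a strict monoidal category. -/
structure Twine (C : Type u) [Category.{v} C] [MonoidalCategory C]
    (hS : MonStrict C) where
  D : ∀ X Y : C, X ⊗ Y ≅ X ⊗ Y
  nat : ∀ {X Y X' Y' : C} (f : X ⟶ X') (g : Y ⟶ Y'),
    (f ⊗ₘ g) ≫ (D X' Y').hom = (D X Y).hom ≫ (f ⊗ₘ g)
  unit : (D (𝟙_ C) (𝟙_ C)).hom = 𝟙 (𝟙_ C ⊗ 𝟙_ C)
  /-- `(D_{X,Y} ⊗ id_Z) D_{X⊗Y,Z} = (id_X ⊗ D_{Y,Z}) D_{X,Y⊗Z}` -/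
  fus : ∀ X Y Z : C, (D (X ⊗ Y) Z).hom ≫ ((D X Y).hom ⊗ₘ 𝟙 Z)
    = cE (by simp [hS.assocObj]) ((D X (Y ⊗ Z)).hom ≫ (𝟙 X ⊗ₘ (D Y Z).hom))
  /-- the entwining axiom -/
  ent : ∀ X Y Z T : C,
    cE (by simp [hS.assocObj]) (𝟙 X ⊗ₘ (D Y (Z ⊗ T)).hom) ≫
      cE (by simp [hS.assocObj]) (𝟙 X ⊗ₘ ((D Y Z).inv ⊗ₘ 𝟙 T)) ≫
        ((D (X ⊗ Y) Z).hom ⊗ₘ 𝟙 T)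
    = ((D (X ⊗ Y) Z).hom ⊗ₘ 𝟙 T) ≫
        cE (by simp [hS.assocObj]) (𝟙 X ⊗ₘ ((D Y Z).inv ⊗ₘ 𝟙 T)) ≫
          cE (by simp [hS.assocObj]) (𝟙 X ⊗ₘ (D Y (Z ⊗ T)).hom)

/-- A strong twine on a strict monoidal category. -/
structure StrongTwine (C : Type u) [Category.{v} C] [MonoidalCategory C]
    (hS : MonStrict C) where
  D : ∀ X Y : C, X ⊗ Y ≅ X ⊗ Y
  nat : ∀ {X Y X' Y' : C} (f : X ⟶ X') (g : Y ⟶ Y'),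
    (f ⊗ₘ g) ≫ (D X' Y').hom = (D X Y).hom ≫ (f ⊗ₘ g)
  unit : (D (𝟙_ C) (𝟙_ C)).hom = 𝟙 (𝟙_ C ⊗ 𝟙_ C)
  /-- `(T_{U,V} ⊗ id_W) T_{U⊗V,W} = (id_U ⊗ T_{V,W}) T_{U,V⊗W}` -/
  fus : ∀ X Y Z : C, (D (X ⊗ Y) Z).hom ≫ ((D X Y).hom ⊗ₘ 𝟙 Z)
    = cE (by simp [hS.assocObj]) ((D X (Y ⊗ Z)).hom ≫ (𝟙 X ⊗ₘ (D Y Z).hom))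
  /-- `(T_{U,V} ⊗ id_W)(id_U ⊗ T_{V,W}) = (id_U ⊗ T_{V,W})(T_{U,V} ⊗ id_W)` -/
  comm : ∀ X Y Z : C,
    cE (by simp [hS.assocObj]) (𝟙 X ⊗ₘ (D Y Z).hom) ≫ ((D X Y).hom ⊗ₘ 𝟙 Z)
    = ((D X Y).hom ⊗ₘ 𝟙 Z) ≫ cE (by simp [hS.assocObj]) (𝟙 X ⊗ₘ (D Y Z).hom)

/-- A D-structure (consisting of isomorphisms) on a strict monoidal category. -/
structure DStructure (C : Type u) [Category.{v} C] [MonoidalCategory C]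
    (hS : MonStrict C) where
  R : ∀ X : C, X ≅ X
  nat : ∀ {X Y : C} (f : X ⟶ Y), f ≫ (R Y).hom = (R X).hom ≫ f
  unit : (R (𝟙_ C)).hom = 𝟙 (𝟙_ C)
  /-- `(R_{X⊗Y} ⊗ id_Z)(id_X ⊗ R_{Y⊗Z}) = (id_X ⊗ R_{Y⊗Z})(R_{X⊗Y} ⊗ id_Z)` -/
  comm : ∀ X Y Z : C,
    cE (by simp [hS.assocObj]) (𝟙 X ⊗ₘ (R (Y ⊗ Z)).hom) ≫ ((R (X ⊗ Y)).hom ⊗ₘ 𝟙 Z)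
    = ((R (X ⊗ Y)).hom ⊗ₘ 𝟙 Z) ≫ cE (by simp [hS.assocObj]) (𝟙 X ⊗ₘ (R (Y ⊗ Z)).hom)

section Stmt11Aux
set_option linter.unusedSectionVars false
set_option linter.unusedVariables false

private lemma stmt11_id_tensor_eqToHom (X : C) {Y Y' : C} (h : Y = Y') :
    (𝟙 X ⊗ₘ eqToHom h) = eqToHom (by rw [h]) := by subst h; simp

private lemma stmt11_eqToHom_tensor_id (Y : C) {X X' : C} (h : X = X') :
    (eqToHom h ⊗ₘ 𝟙 Y) = eqToHom (by rw [h]) := by subst h; simp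

private lemma stmt11_strAssoc (hS : MonStrict C) {X X' Y Y' Z Z' : C}
    (f : X ⟶ X') (g : Y ⟶ Y') (k : Z ⟶ Z') :
    (f ⊗ₘ g) ⊗ₘ k = eqToHom (hS.assocObj X Y Z) ≫ (f ⊗ₘ (g ⊗ₘ k)) ≫
      eqToHom (hS.assocObj X' Y' Z').symm := by
  have h := associator_naturality f g k
  rw [hS.assocHom, hS.assocHom, comp_eqToHom_iff] at h
  simpa using h

private lemma stmt11_strRid (hS : MonStrict C) {X X' : C} (f : X ⟶ X') :
    f ⊗ₘ 𝟙 (𝟙_ C) = eqToHom (hS.ridObj X) ≫ f ≫ eqToHom (hS.ridObj X').symm := by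
  have h := rightUnitor_naturality f
  rw [hS.ridHom, hS.ridHom, comp_eqToHom_iff] at h
  simpa using h

private lemma stmt11_Dtrans (Dm : ∀ U V : C, U ⊗ V ≅ U ⊗ V) {U U' V V' : C}
    (hU : U = U') (hV : V = V') :
    (Dm U V).hom = eqToHom (by rw [hU, hV]) ≫ (Dm U' V').hom ≫
      eqToHom (show U' ⊗ V' = U ⊗ V by rw [hU, hV]) := by
  subst hU; subst hV; simp

private lemma stmt11_cancel_hom {B W : C} {u v : B ⟶ B} (huv : u ≫ v = 𝟙 B) (k : B ⟶ W) :
    u ≫ v ≫ k = k := by rw [← Category.assoc, huv, Category.id_comp]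

private lemma stmt11_comm_reassoc {B W : C} {u v : B ⟶ B} (h : u ≫ v = v ≫ u) (k : B ⟶ W) :
    u ≫ v ≫ k = v ≫ u ≫ k := by rw [← Category.assoc, h, Category.assoc]

private lemma stmt11_conj_inv {P Q : C} (h : P = Q) {u v : Q ⟶ Q} (huv : u ≫ v = 𝟙 Q) :
    (eqToHom h ≫ u ≫ eqToHom h.symm) ≫ (eqToHom h ≫ v ≫ eqToHom h.symm) = 𝟙 P := by
  subst h; simpa using huv

private lemma stmt11_conj_comm {P Q : C} (h : P = Q) {u v : Q ⟶ Q} (huv : u ≫ v = v ≫ u) :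
    (eqToHom h ≫ u ≫ eqToHom h.symm) ≫ (eqToHom h ≫ v ≫ eqToHom h.symm)
    = (eqToHom h ≫ v ≫ eqToHom h.symm) ≫ (eqToHom h ≫ u ≫ eqToHom h.symm) := by
  subst h; simpa using huv

private lemma stmt11_entAlg {B : C} (a b c d e a' b' cinv dinv einv : B ⟶ B)
    (he : e ≫ einv = 𝟙 B)
    (hc : c ≫ cinv = 𝟙 B) (hc' : cinv ≫ c = 𝟙 B)
    (hd : d ≫ dinv = 𝟙 B) (hd' : dinv ≫ d = 𝟙 B)
    (hce : c ≫ e = e ≫ c)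
    (had : a' ≫ d = d ≫ a') (hbd : b' ≫ d = d ≫ b')
    (hH1 : a ≫ b' ≫ e = b ≫ a' ≫ c)
    (hH2 : a ≫ e = a' ≫ d)
    (hH3 : b' ≫ d = b ≫ c) :
    b ≫ dinv ≫ a = a ≫ dinv ≫ b := by
  have ha : a = a' ≫ d ≫ einv := by
    rw [← Category.assoc, ← hH2]; simp [Category.assoc, he]
  have hb : b = b' ≫ d ≫ cinv := by
    rw [← Category.assoc, hH3]; simp [Category.assoc, hc]
  have hdinva' : dinv ≫ a' = a' ≫ dinv := by
    have h1 := congrArg (fun t => dinv ≫ t ≫ dinv) had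
    simpa only [Category.assoc, stmt11_cancel_hom hd', hd, Category.comp_id] using h1
  have hdinvb' : dinv ≫ b' = b' ≫ dinv := by
    have h1 := congrArg (fun t => dinv ≫ t ≫ dinv) hbd
    simpa only [Category.assoc, stmt11_cancel_hom hd', hd, Category.comp_id] using h1
  have hecinv : e ≫ cinv = cinv ≫ e := by
    have h1 := congrArg (fun t => cinv ≫ t ≫ cinv) hce
    simpa only [Category.assoc, stmt11_cancel_hom hc', hc, Category.comp_id] using h1
  have hdag : a' ≫ einv ≫ b' ≫ e = b' ≫ cinv ≫ a' ≫ c := by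
    have h1 := congrArg (fun t => dinv ≫ t) hH1
    rw [ha, hb] at h1
    simpa only [Category.assoc, stmt11_comm_reassoc hdinva', stmt11_comm_reassoc hdinvb',
      stmt11_cancel_hom hd'] using h1
  have h2 : b' ≫ cinv ≫ a' = a' ≫ einv ≫ b' ≫ e ≫ cinv := by
    have h1 := congrArg (fun t => t ≫ cinv) hdag
    simpa only [Category.assoc, hc, Category.comp_id, stmt11_cancel_hom hc] using h1.symm
  have hkey : b' ≫ cinv ≫ a' ≫ einv = a' ≫ einv ≫ b' ≫ cinv := by
    have h1 := congrArg (fun t => t ≫ einv) h2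
    simpa only [Category.assoc, stmt11_comm_reassoc hecinv, stmt11_cancel_hom he, he,
      Category.comp_id] using h1
  have L : b ≫ dinv ≫ a = d ≫ a' ≫ einv ≫ b' ≫ cinv := by
    rw [hb, ha]
    simp only [Category.assoc, stmt11_comm_reassoc hdinva', stmt11_cancel_hom hd']
    rw [stmt11_comm_reassoc hbd, hkey]
  have R : a ≫ dinv ≫ b = d ≫ a' ≫ einv ≫ b' ≫ cinv := by
    rw [ha, hb]
    simp only [Category.assoc, stmt11_comm_reassoc hdinvb', stmt11_cancel_hom hd']
    rw [stmt11_comm_reassoc had]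
  rw [L, R]

end Stmt11Aux

set_option maxHeartbeats 1600000 in


/-- A natural isomorphism `D` with `D_{I,X} = D_{X,I} = id_X` satisfying the fused relation
is a twine, i.e. makes the category entwined. -/
theorem stmt11 (hS : MonStrict C) (Dm : ∀ U V : C, U ⊗ V ≅ U ⊗ V)
    (nat : ∀ {X Y X' Y' : C} (f : X ⟶ X') (g : Y ⟶ Y'),
      (f ⊗ₘ g) ≫ (Dm X' Y').hom = (Dm X Y).hom ≫ (f ⊗ₘ g))
    (hIL : ∀ X : C, (Dm (𝟙_ C) X).hom = 𝟙 (𝟙_ C ⊗ X))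
    (hIR : ∀ X : C, (Dm X (𝟙_ C)).hom = 𝟙 (X ⊗ 𝟙_ C))
    (hfused : ∀ X Y Z T : C,
      ((Dm (X ⊗ Y) Z).hom ⊗ₘ 𝟙 T) ≫
        cE (by simp [hS.assocObj]) (𝟙 X ⊗ₘ (Dm (Y ⊗ Z) T).hom) ≫
          (((Dm X Y).hom ⊗ₘ 𝟙 Z) ⊗ₘ 𝟙 T)
      = cE (by simp [hS.assocObj]) (𝟙 X ⊗ₘ (Dm Y (Z ⊗ T)).hom) ≫
          cE (by simp [hS.assocObj]) ((Dm X (Y ⊗ Z)).hom ⊗ₘ 𝟙 T) ≫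
            cE (by simp [hS.assocObj]) (𝟙 (X ⊗ Y) ⊗ₘ (Dm Z T).hom)) :
    ∃ T : Twine C hS, T.D = Dm := by
  have nat' : ∀ {P Q P' Q' W : C} (f : P ⟶ P') (g : Q ⟶ Q') (k : P' ⊗ Q' ⟶ W),
      (f ⊗ₘ g) ≫ (Dm P' Q').hom ≫ k = (Dm P Q).hom ≫ (f ⊗ₘ g) ≫ k := by
    intros; rw [← Category.assoc, nat, Category.assoc]
  have fusS : ∀ X Y Z : C,
      (Dm (X ⊗ Y) Z).hom ≫ ((Dm X Y).hom ⊗ₘ 𝟙 Z)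
      = eqToHom (hS.assocObj X Y Z) ≫
          ((Dm X (Y ⊗ Z)).hom ≫ (𝟙 X ⊗ₘ (Dm Y Z).hom)) ≫
            eqToHom (hS.assocObj X Y Z).symm := by
    intro X Y Z
    have h := hfused X Y Z (𝟙_ C)
    rw [stmt11_Dtrans Dm (rfl : Y = Y) (hS.ridObj Z)] at h
    simp only [cE, hIR, id_tensorHom_id, stmt11_strRid hS, id_tensor_comp, comp_tensor_id,
      stmt11_id_tensor_eqToHom, stmt11_eqToHom_tensor_id, eqToHom_trans, eqToHom_refl,
      Category.assoc, Category.comp_id, Category.id_comp, eqToHom_trans_assoc] at h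
    rw [eqToHom_comp_iff] at h
    simp only [← Category.assoc] at h
    rw [comp_eqToHom_iff] at h
    simp only [Category.assoc, eqToHom_trans, eqToHom_trans_assoc, eqToHom_refl,
      Category.id_comp, Category.comp_id] at h
    rw [h, nat']
    simp [eqToHom_trans_assoc, eqToHom_trans]
  refine ⟨⟨Dm, fun f g => nat f g, by rw [hIL], ?_, ?_⟩, rfl⟩
  · intro X Y Z
    simp only [cE]
    exact fusS X Y Z
  · intro X Y Z T
    have p1 : ((X ⊗ Y) ⊗ Z) ⊗ T = X ⊗ (Y ⊗ (Z ⊗ T)) := by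
      rw [hS.assocObj X Y Z, hS.assocObj, hS.assocObj]
    have p2 : ((X ⊗ Y) ⊗ Z) ⊗ T = (X ⊗ Y) ⊗ (Z ⊗ T) := by rw [hS.assocObj]
    have p3 : ((X ⊗ Y) ⊗ Z) ⊗ T = X ⊗ ((Y ⊗ Z) ⊗ T) := by
      rw [hS.assocObj X Y Z, hS.assocObj]
    have p4 : ((X ⊗ Y) ⊗ Z) ⊗ T = (X ⊗ (Y ⊗ Z)) ⊗ T := by rw [hS.assocObj X Y Z]
    -- alternate representations
    have eRep : ((Dm X Y).hom ⊗ₘ 𝟙 Z) ⊗ₘ 𝟙 T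
        = eqToHom p2 ≫ ((Dm X Y).hom ⊗ₘ 𝟙 (Z ⊗ T)) ≫ eqToHom p2.symm := by
      rw [stmt11_strAssoc hS, id_tensorHom_id]
    have cRep : eqToHom p2 ≫ (𝟙 (X ⊗ Y) ⊗ₘ (Dm Z T).hom) ≫ eqToHom p2.symm
        = eqToHom p1 ≫ (𝟙 X ⊗ₘ (𝟙 Y ⊗ₘ (Dm Z T).hom)) ≫ eqToHom p1.symm := by
      rw [← id_tensorHom_id, stmt11_strAssoc hS]
      simp only [Category.assoc, eqToHom_trans, eqToHom_trans_assoc]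
    have dRep : eqToHom p3 ≫ (𝟙 X ⊗ₘ ((Dm Y Z).hom ⊗ₘ 𝟙 T)) ≫ eqToHom p3.symm
        = eqToHom p4 ≫ ((𝟙 X ⊗ₘ (Dm Y Z).hom) ⊗ₘ 𝟙 T) ≫ eqToHom p4.symm := by
      rw [stmt11_strAssoc hS]
      simp only [Category.assoc, eqToHom_trans, eqToHom_trans_assoc]
    simp only [cE]
    refine stmt11_entAlg
      ((Dm (X ⊗ Y) Z).hom ⊗ₘ 𝟙 T)
      (eqToHom p1 ≫ (𝟙 X ⊗ₘ (Dm Y (Z ⊗ T)).hom) ≫ eqToHom p1.symm)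
      (eqToHom p2 ≫ (𝟙 (X ⊗ Y) ⊗ₘ (Dm Z T).hom) ≫ eqToHom p2.symm)
      (eqToHom p3 ≫ (𝟙 X ⊗ₘ ((Dm Y Z).hom ⊗ₘ 𝟙 T)) ≫ eqToHom p3.symm)
      (((Dm X Y).hom ⊗ₘ 𝟙 Z) ⊗ₘ 𝟙 T)
      (eqToHom p4 ≫ ((Dm X (Y ⊗ Z)).hom ⊗ₘ 𝟙 T) ≫ eqToHom p4.symm)
      (eqToHom p3 ≫ (𝟙 X ⊗ₘ (Dm (Y ⊗ Z) T).hom) ≫ eqToHom p3.symm)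
      (eqToHom p2 ≫ (𝟙 (X ⊗ Y) ⊗ₘ (Dm Z T).inv) ≫ eqToHom p2.symm)
      (eqToHom p3 ≫ (𝟙 X ⊗ₘ ((Dm Y Z).inv ⊗ₘ 𝟙 T)) ≫ eqToHom p3.symm)
      (((Dm X Y).inv ⊗ₘ 𝟙 Z) ⊗ₘ 𝟙 T)
      ?_ ?_ ?_ ?_ ?_ ?_ ?_ ?_ ?_ ?_ ?_
    · simp only [← comp_tensor_id, Iso.hom_inv_id, id_tensorHom_id]
    · exact stmt11_conj_inv p2 (by simp only [← id_tensor_comp, Iso.hom_inv_id, id_tensorHom_id])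
    · exact stmt11_conj_inv p2 (by simp only [← id_tensor_comp, Iso.inv_hom_id, id_tensorHom_id])
    · exact stmt11_conj_inv p3 (by
        simp only [← id_tensor_comp, ← comp_tensor_id, Iso.hom_inv_id, id_tensorHom_id])
    · exact stmt11_conj_inv p3 (by
        simp only [← id_tensor_comp, ← comp_tensor_id, Iso.inv_hom_id, id_tensorHom_id])
    · -- hce : c ≫ e = e ≫ c
      rw [eRep]
      exact stmt11_conj_comm p2 (by
        rw [id_tensor_comp_tensor_id, tensor_id_comp_id_tensor])
    · -- had : a' ≫ d = d ≫ a'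
      rw [dRep]
      exact stmt11_conj_comm p4 (by
        rw [← comp_tensor_id, ← comp_tensor_id, nat])
    · -- hbd : b' ≫ d = d ≫ b'
      exact stmt11_conj_comm p3 (by
        rw [← id_tensor_comp, ← id_tensor_comp, ← nat])
    · -- hH1
      simpa only [cE] using hfused X Y Z T
    · -- hH2 : a ≫ e = a' ≫ d
      rw [dRep, ← Category.assoc, ← comp_tensor_id, fusS X Y Z]
      simp only [comp_tensor_id, stmt11_eqToHom_tensor_id, Category.assoc,
        eqToHom_trans, eqToHom_trans_assoc, eqToHom_refl, Category.comp_id,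
        Category.id_comp]
    · -- hH3 : b' ≫ d = b ≫ c
      rw [cRep]
      have h := congrArg (fun t => 𝟙 X ⊗ₘ t) (fusS Y Z T)
      simp only [id_tensor_comp, stmt11_id_tensor_eqToHom] at h
      calc (eqToHom p3 ≫ (𝟙 X ⊗ₘ (Dm (Y ⊗ Z) T).hom) ≫ eqToHom p3.symm) ≫
            eqToHom p3 ≫ (𝟙 X ⊗ₘ ((Dm Y Z).hom ⊗ₘ 𝟙 T)) ≫ eqToHom p3.symm
          = eqToHom p3 ≫ ((𝟙 X ⊗ₘ (Dm (Y ⊗ Z) T).hom) ≫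
              (𝟙 X ⊗ₘ ((Dm Y Z).hom ⊗ₘ 𝟙 T))) ≫ eqToHom p3.symm := by
            simp only [Category.assoc, eqToHom_trans, eqToHom_refl, Category.id_comp,
              eqToHom_trans_assoc, Category.comp_id]
        _ = _ := by
            rw [h]
            simp only [Category.assoc, eqToHom_trans, eqToHom_trans_assoc,
              eqToHom_refl, Category.id_comp, Category.comp_id]
end

section
/- Let (C, D) be an entwined strict monoidal category. Define A_{X,Y,Z} := D_{X⊗Y,Z}(id_X⊗D_{Y,Z}⁻¹) and B_{X,Y,Z} := (id_X⊗D_{Y,Z}⁻¹)D_{X⊗Y,Z}. Then (C, A, B) is a pure-braided category. -/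
open CategoryTheory MonoidalCategory

universe v u

variable {C : Type u} [Category.{v} C] [MonoidalCategory C]

set_option linter.unusedSectionVars false

namespace SAux

lemma cE_self {A : C} (e : A = A) (f : A ⟶ A) : cE e f = f := by
  unfold cE; rw [show e = rfl from rfl]; simp

lemma cE_comp {A B : C} (h h' : A = B) (f g : B ⟶ B) :
    cE h f ≫ cE h' g = cE h (f ≫ g) := by
  unfold cE; rw [show h' = h from rfl]; simp

lemma cE_cE {A B D : C} (h : A = B) (h' : B = D) (f : D ⟶ D) :
    cE h (cE h' f) = cE (h.trans h') f := by unfold cE; simp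

lemma cE_id {A B : C} (h : A = B) : cE h (𝟙 B) = 𝟙 A := by unfold cE; simp

lemma cE_inj {A B : C} (h h' : A = B) {f g : B ⟶ B} (w : cE h f = cE h' g) : f = g := by
  subst h; rw [cE_self, cE_self] at w; exact w

lemma cE_congr {A B : C} (h h' : A = B) (f : B ⟶ B) : cE h f = cE h' f := rfl

lemma id_tensor_cE (X : C) {A B : C} (h : A = B) (f : B ⟶ B) (h' : X ⊗ A = X ⊗ B) :
    𝟙 X ⊗ₘ cE h f = cE h' (𝟙 X ⊗ₘ f) := by subst h; rw [cE_self, cE_self]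

lemma cE_tensor_id {A B : C} (h : A = B) (f : B ⟶ B) (X : C) (h' : A ⊗ X = B ⊗ X) :
    cE h f ⊗ₘ 𝟙 X = cE h' (f ⊗ₘ 𝟙 X) := by subst h; rw [cE_self, cE_self]

lemma assoc_natural (hS : MonStrict C) {X Y Z X' Y' Z' : C} (f : X ⟶ X') (g : Y ⟶ Y') (h : Z ⟶ Z')
    (e : (X ⊗ Y) ⊗ Z = X ⊗ (Y ⊗ Z)) (e' : (X' ⊗ Y') ⊗ Z' = X' ⊗ (Y' ⊗ Z')) :
    ((f ⊗ₘ g) ⊗ₘ h) ≫ eqToHom e' = eqToHom e ≫ (f ⊗ₘ (g ⊗ₘ h)) := by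
  rw [show e = hS.assocObj X Y Z from rfl, show e' = hS.assocObj X' Y' Z' from rfl,
    ← hS.assocHom, ← hS.assocHom]
  exact associator_naturality f g h

lemma cE_assoc3 (hS : MonStrict C) {X Y Z : C} (f : X ⟶ X) (g : Y ⟶ Y) (h : Z ⟶ Z)
    (e : (X ⊗ Y) ⊗ Z = X ⊗ (Y ⊗ Z)) :
    cE e (f ⊗ₘ (g ⊗ₘ h)) = (f ⊗ₘ g) ⊗ₘ h := by
  unfold cE
  rw [← Category.assoc, ← assoc_natural hS f g h e e, Category.assoc, eqToHom_trans,
    eqToHom_refl, Category.comp_id]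

lemma cE_assoc3' (hS : MonStrict C) {X Y Z : C} (f : X ⟶ X) (g : Y ⟶ Y) (h : Z ⟶ Z)
    (e : X ⊗ (Y ⊗ Z) = (X ⊗ Y) ⊗ Z) :
    cE e ((f ⊗ₘ g) ⊗ₘ h) = f ⊗ₘ (g ⊗ₘ h) := by
  rw [← cE_assoc3 hS f g h (hS.assocObj X Y Z), cE_cE, cE_self]

lemma id_tensor_endo (hS : MonStrict C) {X : C} (f : X ⟶ X) (e : 𝟙_ C ⊗ X = X) :
    𝟙 (𝟙_ C) ⊗ₘ f = cE e f := by
  have n := leftUnitor_naturality f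
  rw [hS.lidHom] at n
  rw [id_tensorHom]
  unfold cE
  rw [← cancel_mono (eqToHom e)]
  simpa using n

lemma tensor_id_endo (hS : MonStrict C) {X : C} (f : X ⟶ X) (e : X ⊗ 𝟙_ C = X) :
    f ⊗ₘ 𝟙 (𝟙_ C) = cE e f := by
  have n := rightUnitor_naturality f
  rw [hS.ridHom] at n
  rw [tensorHom_id]
  unfold cE
  rw [← cancel_mono (eqToHom e)]
  simpa using n

end SAux


namespace SAux

lemma cE_split {A B : C} (h : A = B) (f g : B ⟶ B) :
    cE h (f ≫ g) = cE h f ≫ cE h g := (cE_comp h h f g).symm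

lemma cE_cancel {A B : C} (h h' : A = B) (f : B ≅ B) :
    cE h f.hom ≫ cE h' f.inv = 𝟙 A := by
  rw [cE_comp, Iso.hom_inv_id, cE_id]

lemma cE_cancel' {A B : C} (h h' : A = B) (f : B ≅ B) :
    cE h f.inv ≫ cE h' f.hom = 𝟙 A := by
  rw [cE_comp, Iso.inv_hom_id, cE_id]

section Tw
variable (hS : MonStrict C) (T : Twine C hS)

lemma nat_inv {X Y X' Y' : C} (f : X ⟶ X') (g : Y ⟶ Y') :
    (f ⊗ₘ g) ≫ (T.D X' Y').inv = (T.D X Y).inv ≫ (f ⊗ₘ g) := by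
  rw [Iso.comp_inv_eq, Category.assoc, T.nat f g, Iso.inv_hom_id_assoc]

lemma D_congr {A A' B B' : C} (hA : A = A') (hB : B = B') (e : A ⊗ B = A' ⊗ B') :
    cE e (T.D A' B').hom = (T.D A B).hom := by
  subst hA; subst hB; rw [cE_self]

lemma D_congr_inv {A A' B B' : C} (hA : A = A') (hB : B = B') (e : A ⊗ B = A' ⊗ B') :
    cE e (T.D A' B').inv = (T.D A B).inv := by
  subst hA; subst hB; rw [cE_self]

lemma D_unit_left (Z : C) : (T.D (𝟙_ C) Z).hom = 𝟙 (𝟙_ C ⊗ Z) := by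
  have fus := T.fus (𝟙_ C) (𝟙_ C) Z
  rw [T.unit, id_tensorHom_id, Category.comp_id] at fus
  rw [← D_congr hS T (hS.lidObj (𝟙_ C)) rfl (by rw [hS.lidObj]),
    ← D_congr hS T rfl (hS.lidObj Z) (by rw [hS.lidObj]),
    id_tensor_endo hS (T.D (𝟙_ C) Z).hom (hS.lidObj (𝟙_ C ⊗ Z)),
    cE_comp, cE_cE] at fus
  have w := cE_inj _ _ fus
  have h2 : (T.D (𝟙_ C) Z).inv ≫ (T.D (𝟙_ C) Z).hom
      = (T.D (𝟙_ C) Z).inv ≫ (T.D (𝟙_ C) Z).hom ≫ (T.D (𝟙_ C) Z).hom := by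
    rw [← w]
  simpa using h2.symm

lemma D_unit_left_inv (Z : C) : (T.D (𝟙_ C) Z).inv = 𝟙 (𝟙_ C ⊗ Z) := by
  have := (T.D (𝟙_ C) Z).hom_inv_id
  rw [D_unit_left hS T, Category.id_comp] at this
  exact this

lemma D_unit_right (X : C) : (T.D X (𝟙_ C)).hom = 𝟙 (X ⊗ 𝟙_ C) := by
  have fus := T.fus X (𝟙_ C) (𝟙_ C)
  rw [T.unit, id_tensorHom_id, Category.comp_id] at fus
  rw [← D_congr hS T (hS.ridObj X) rfl (by rw [hS.ridObj]),
    ← D_congr hS T rfl (hS.lidObj (𝟙_ C)) (by rw [hS.lidObj]),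
    tensor_id_endo hS (T.D X (𝟙_ C)).hom (hS.ridObj (X ⊗ 𝟙_ C)),
    cE_comp, cE_cE] at fus
  have w := cE_inj _ _ fus
  have h2 : ((T.D X (𝟙_ C)).hom ≫ (T.D X (𝟙_ C)).hom) ≫ (T.D X (𝟙_ C)).inv
      = (T.D X (𝟙_ C)).hom ≫ (T.D X (𝟙_ C)).inv := by rw [w]
  simpa using h2

lemma D_unit_right_inv (X : C) : (T.D X (𝟙_ C)).inv = 𝟙 (X ⊗ 𝟙_ C) := by
  have := (T.D X (𝟙_ C)).hom_inv_id
  rw [D_unit_right hS T, Category.id_comp] at this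
  exact this

/-- The iso `A_{X,Y,Z}`. -/
def AIso (X Y Z : C) : X ⊗ (Y ⊗ Z) ≅ X ⊗ (Y ⊗ Z) where
  hom := (𝟙 X ⊗ₘ (T.D Y Z).inv) ≫ cE (by simp [hS.assocObj]) (T.D (X ⊗ Y) Z).hom
  inv := cE (by simp [hS.assocObj]) (T.D (X ⊗ Y) Z).inv ≫ (𝟙 X ⊗ₘ (T.D Y Z).hom)
  hom_inv_id := by
    rw [Category.assoc, ← Category.assoc (cE _ _), cE_cancel, Category.id_comp,
      ← id_tensor_comp, Iso.inv_hom_id, id_tensorHom_id]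
  inv_hom_id := by
    rw [Category.assoc, ← Category.assoc (𝟙 X ⊗ₘ _), ← id_tensor_comp, Iso.hom_inv_id,
      id_tensorHom_id, Category.id_comp, cE_cancel']

/-- The iso `B_{X,Y,Z}`. -/
def BIso (X Y Z : C) : X ⊗ (Y ⊗ Z) ≅ X ⊗ (Y ⊗ Z) where
  hom := cE (by simp [hS.assocObj]) (T.D (X ⊗ Y) Z).hom ≫ (𝟙 X ⊗ₘ (T.D Y Z).inv)
  inv := (𝟙 X ⊗ₘ (T.D Y Z).hom) ≫ cE (by simp [hS.assocObj]) (T.D (X ⊗ Y) Z).inv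
  hom_inv_id := by
    rw [Category.assoc, ← Category.assoc (𝟙 X ⊗ₘ _), ← id_tensor_comp, Iso.inv_hom_id,
      id_tensorHom_id, Category.id_comp, cE_cancel]
  inv_hom_id := by
    rw [Category.assoc, ← Category.assoc (cE _ _), cE_cancel', Category.id_comp,
      ← id_tensor_comp, Iso.hom_inv_id, id_tensorHom_id]

lemma A_alt (X Y Z : C) (e : X ⊗ (Y ⊗ Z) = (X ⊗ Y) ⊗ Z) :
    (AIso hS T X Y Z).hom = (T.D X (Y ⊗ Z)).hom ≫ cE e ((T.D X Y).inv ⊗ₘ 𝟙 Z) := by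
  have fus := T.fus X Y Z
  have hD : (T.D (X ⊗ Y) Z).hom
      = cE (by simp [hS.assocObj]) ((T.D X (Y ⊗ Z)).hom ≫ (𝟙 X ⊗ₘ (T.D Y Z).hom)) ≫
        ((T.D X Y).inv ⊗ₘ 𝟙 Z) := by
    rw [← fus, Category.assoc, ← comp_tensor_id, Iso.hom_inv_id, id_tensorHom_id,
      Category.comp_id]
  show (𝟙 X ⊗ₘ (T.D Y Z).inv) ≫ cE (by simp [hS.assocObj]) (T.D (X ⊗ Y) Z).hom = _
  rw [hD, cE_split, cE_cE, cE_self]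
  simp only [Category.assoc]
  rw [← Category.assoc, T.nat (𝟙 X) (T.D Y Z).inv, Category.assoc,
    ← id_tensor_comp_assoc, Iso.inv_hom_id, id_tensorHom_id, Category.id_comp]

end Tw
end SAux

namespace SAux

lemma tensor_exchange {X X' Y Y' : C} (f : X ⟶ X') (g : Y ⟶ Y') (m : Y ⟶ Y)
    (m' : Y' ⟶ Y') (w : g ≫ m' = m ≫ g) :
    (f ⊗ₘ g) ≫ (𝟙 X' ⊗ₘ m') = (𝟙 X ⊗ₘ m) ≫ (f ⊗ₘ g) := by
  rw [tensorHom_comp_tensorHom, tensorHom_comp_tensorHom, Category.comp_id, Category.id_comp, w]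

lemma assoc_natural' (hS : MonStrict C) {X Y Z X' Y' Z' : C}
    (f : X ⟶ X') (g : Y ⟶ Y') (h : Z ⟶ Z')
    (e : X ⊗ (Y ⊗ Z) = (X ⊗ Y) ⊗ Z) (e' : X' ⊗ (Y' ⊗ Z') = (X' ⊗ Y') ⊗ Z') :
    (f ⊗ₘ (g ⊗ₘ h)) ≫ eqToHom e' = eqToHom e ≫ ((f ⊗ₘ g) ⊗ₘ h) := by
  rw [← cancel_mono (eqToHom e'.symm)]
  simp only [Category.assoc, eqToHom_trans]
  rw [assoc_natural hS f g h e.symm e'.symm]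
  simp

section Tw2
variable (hS : MonStrict C) (T : Twine C hS)

lemma natDcE {U V W U' V' W' : C} (f : U ⟶ U') (g : V ⟶ V') (h : W ⟶ W')
    (e : U ⊗ (V ⊗ W) = (U ⊗ V) ⊗ W) (e' : U' ⊗ (V' ⊗ W') = (U' ⊗ V') ⊗ W') :
    (f ⊗ₘ (g ⊗ₘ h)) ≫ cE e' (T.D (U' ⊗ V') W').hom
      = cE e (T.D (U ⊗ V) W).hom ≫ (f ⊗ₘ (g ⊗ₘ h)) := by
  unfold cE
  rw [← Category.assoc, assoc_natural' hS f g h e e']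
  simp only [Category.assoc]
  slice_lhs 2 3 => rw [T.nat (f ⊗ₘ g) h]
  simp only [Category.assoc]
  rw [assoc_natural hS f g h e.symm e'.symm]

lemma lem_natA {U V W U' V' W' : C} (f : U ⟶ U') (g : V ⟶ V') (h : W ⟶ W') :
    (f ⊗ₘ (g ⊗ₘ h)) ≫ (AIso hS T U' V' W').hom
      = (AIso hS T U V W).hom ≫ (f ⊗ₘ (g ⊗ₘ h)) := by
  show (f ⊗ₘ (g ⊗ₘ h)) ≫ (𝟙 U' ⊗ₘ (T.D V' W').inv) ≫ cE _ (T.D (U' ⊗ V') W').hom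
    = ((𝟙 U ⊗ₘ (T.D V W).inv) ≫ cE _ (T.D (U ⊗ V) W).hom) ≫ (f ⊗ₘ (g ⊗ₘ h))
  rw [← Category.assoc, tensor_exchange f (g ⊗ₘ h) _ _ (nat_inv hS T g h),
    Category.assoc, natDcE hS T f g h (by simp [hS.assocObj]) (by simp [hS.assocObj]),
    Category.assoc]

lemma lem_natB {U V W U' V' W' : C} (f : U ⟶ U') (g : V ⟶ V') (h : W ⟶ W') :
    (f ⊗ₘ (g ⊗ₘ h)) ≫ (BIso hS T U' V' W').hom
      = (BIso hS T U V W).hom ≫ (f ⊗ₘ (g ⊗ₘ h)) := by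
  show (f ⊗ₘ (g ⊗ₘ h)) ≫ cE _ (T.D (U' ⊗ V') W').hom ≫ (𝟙 U' ⊗ₘ (T.D V' W').inv)
    = (cE _ (T.D (U ⊗ V) W).hom ≫ (𝟙 U ⊗ₘ (T.D V W).inv)) ≫ (f ⊗ₘ (g ⊗ₘ h))
  rw [← Category.assoc,
    natDcE hS T f g h (by simp [hS.assocObj]) (by simp [hS.assocObj]),
    Category.assoc, tensor_exchange f (g ⊗ₘ h) _ _ (nat_inv hS T g h),
    ← Category.assoc]

lemma lem_t1t (U V : C) : AIso hS T U (𝟙_ C) V = BIso hS T U (𝟙_ C) V := by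
  apply Iso.ext
  show (𝟙 U ⊗ₘ (T.D (𝟙_ C) V).inv) ≫ cE _ (T.D (U ⊗ 𝟙_ C) V).hom
    = cE _ (T.D (U ⊗ 𝟙_ C) V).hom ≫ (𝟙 U ⊗ₘ (T.D (𝟙_ C) V).inv)
  rw [D_unit_left_inv hS T, id_tensorHom_id, Category.id_comp, Category.comp_id]

lemma fus_cE (V W X : C) (n : V ⊗ (W ⊗ X) = (V ⊗ W) ⊗ X) :
    (T.D V (W ⊗ X)).hom ≫ (𝟙 V ⊗ₘ (T.D W X).hom)
      = cE n (T.D (V ⊗ W) X).hom ≫ cE n ((T.D V W).hom ⊗ₘ 𝟙 X) := by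
  have fus := T.fus V W X
  have := congrArg (cE n) fus
  rw [cE_cE, cE_self, cE_split] at this
  exact this.symm

lemma fus_inv (V W X : C) (n : V ⊗ (W ⊗ X) = (V ⊗ W) ⊗ X) :
    (T.D V (W ⊗ X)).inv = (𝟙 V ⊗ₘ (T.D W X).hom) ≫ cE n ((T.D V W).inv ⊗ₘ 𝟙 X) ≫
      cE n (T.D (V ⊗ W) X).inv := by
  rw [← cancel_epi (T.D V (W ⊗ X)).hom, Iso.hom_inv_id, ← Category.assoc, fus_cE hS T V W X n]
  simp only [Category.assoc]
  rw [cE_comp, cE_comp, cE_comp]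
  have w : (T.D (V ⊗ W) X).hom ≫ ((T.D V W).hom ⊗ₘ 𝟙 X) ≫ ((T.D V W).inv ⊗ₘ 𝟙 X) ≫
      (T.D (V ⊗ W) X).inv = 𝟙 ((V ⊗ W) ⊗ X) := by
    slice_lhs 2 3 => rw [← comp_tensor_id, Iso.hom_inv_id, id_tensorHom_id]
    simp
  rw [w, cE_id]

end Tw2
end SAux

namespace SAux
section Tw3
variable (hS : MonStrict C) (T : Twine C hS)

lemma AIso_hom (X Y Z : C) : (AIso hS T X Y Z).hom
    = (𝟙 X ⊗ₘ (T.D Y Z).inv) ≫ cE (by simp [hS.assocObj]) (T.D (X ⊗ Y) Z).hom := rfl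

lemma BIso_hom (X Y Z : C) : (BIso hS T X Y Z).hom
    = cE (by simp [hS.assocObj]) (T.D (X ⊗ Y) Z).hom ≫ (𝟙 X ⊗ₘ (T.D Y Z).inv) := rfl

lemma lem_a1 (U V W X : C)
    (e1 : (U ⊗ V) ⊗ (W ⊗ X) = U ⊗ (V ⊗ (W ⊗ X)))
    (e2 : U ⊗ (V ⊗ (W ⊗ X)) = U ⊗ ((V ⊗ W) ⊗ X)) :
    (AIso hS T (U ⊗ V) W X).hom =
      cE e1 ((𝟙 U ⊗ₘ (AIso hS T V W X).hom) ≫ cE e2 (AIso hS T U (V ⊗ W) X).hom) := by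
  have n1 : U ⊗ (V ⊗ (W ⊗ X)) = U ⊗ ((V ⊗ W) ⊗ X) := by simp [hS.assocObj]
  rw [AIso_hom, AIso_hom, AIso_hom, id_tensor_comp,
    id_tensor_cE U _ _ n1, cE_split e2, cE_cE]
  have mid : cE n1 (𝟙 U ⊗ₘ (T.D (V ⊗ W) X).hom) ≫ cE e2 (𝟙 U ⊗ₘ (T.D (V ⊗ W) X).inv)
      = 𝟙 (U ⊗ (V ⊗ (W ⊗ X))) := by
    rw [cE_comp, ← id_tensor_comp, Iso.hom_inv_id, id_tensorHom_id, cE_id]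
  simp only [Category.assoc]
  rw [reassoc_of% mid, cE_split e1, cE_assoc3 hS (𝟙 U) (𝟙 V) (T.D W X).inv e1,
    id_tensorHom_id, cE_cE,
    ← D_congr hS T (hS.assocObj U V W).symm rfl (by simp [hS.assocObj]), cE_cE]

lemma lem_baba (U V W X : C)
    (e1 : (U ⊗ V) ⊗ (W ⊗ X) = U ⊗ (V ⊗ (W ⊗ X)))
    (e2 : U ⊗ (V ⊗ (W ⊗ X)) = U ⊗ ((V ⊗ W) ⊗ X)) :
    (BIso hS T (U ⊗ V) W X).hom =
      cE e1 (cE e2 (BIso hS T U (V ⊗ W) X).hom ≫ (𝟙 U ⊗ₘ (BIso hS T V W X).hom)) := by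
  have n1 : U ⊗ (V ⊗ (W ⊗ X)) = U ⊗ ((V ⊗ W) ⊗ X) := by simp [hS.assocObj]
  rw [BIso_hom, BIso_hom, BIso_hom, id_tensor_comp,
    id_tensor_cE U _ _ n1, cE_split e2, cE_cE]
  have mid : cE e2 (𝟙 U ⊗ₘ (T.D (V ⊗ W) X).inv) ≫ cE n1 (𝟙 U ⊗ₘ (T.D (V ⊗ W) X).hom)
      = 𝟙 (U ⊗ (V ⊗ (W ⊗ X))) := by
    rw [cE_comp, ← id_tensor_comp, Iso.inv_hom_id, id_tensorHom_id, cE_id]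
  simp only [Category.assoc]
  rw [reassoc_of% mid, cE_split e1, cE_assoc3 hS (𝟙 U) (𝟙 V) (T.D W X).inv e1,
    id_tensorHom_id, cE_cE,
    ← D_congr hS T (hS.assocObj U V W).symm rfl (by simp [hS.assocObj]), cE_cE]

set_option maxHeartbeats 1000000 in
lemma lem_a2 (U V W X : C)
    (e1 : U ⊗ (V ⊗ (W ⊗ X)) = (U ⊗ (V ⊗ W)) ⊗ X)
    (e2 : (U ⊗ (V ⊗ W)) ⊗ X = U ⊗ ((V ⊗ W) ⊗ X)) :
    (AIso hS T U V (W ⊗ X)).hom =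
      cE e1 (cE e2 (AIso hS T U (V ⊗ W) X).hom ≫ ((AIso hS T U V W).hom ⊗ₘ 𝟙 X)) := by
  have m1 : (U ⊗ (V ⊗ W)) ⊗ X = ((U ⊗ V) ⊗ W) ⊗ X := by simp [hS.assocObj]
  rw [A_alt hS T U V (W ⊗ X) (by simp [hS.assocObj]),
    A_alt hS T U (V ⊗ W) X (by simp [hS.assocObj]),
    A_alt hS T U V W (by simp [hS.assocObj]),
    comp_tensor_id, cE_tensor_id _ _ X m1, cE_split e2, cE_cE, cE_self]
  have mid : ((T.D U (V ⊗ W)).inv ⊗ₘ 𝟙 X) ≫ ((T.D U (V ⊗ W)).hom ⊗ₘ 𝟙 X)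
      = 𝟙 ((U ⊗ (V ⊗ W)) ⊗ X) := by
    rw [← comp_tensor_id, Iso.inv_hom_id, id_tensorHom_id]
  simp only [Category.assoc]
  rw [reassoc_of% mid, cE_split e1, cE_cE,
    D_congr hS T rfl (hS.assocObj V W X).symm (by simp [hS.assocObj]),
    ← cE_assoc3 hS (T.D U V).inv (𝟙 W) (𝟙 X) (hS.assocObj (U ⊗ V) W X),
    id_tensorHom_id, cE_cE, cE_cE]

set_option maxHeartbeats 1000000 in
lemma lem_b2 (U V W X : C)
    (e1 : U ⊗ (V ⊗ (W ⊗ X)) = (U ⊗ (V ⊗ W)) ⊗ X)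
    (e2 : (U ⊗ (V ⊗ W)) ⊗ X = U ⊗ ((V ⊗ W) ⊗ X)) :
    (BIso hS T U V (W ⊗ X)).hom =
      cE e1 (((BIso hS T U V W).hom ⊗ₘ 𝟙 X) ≫ cE e2 (BIso hS T U (V ⊗ W) X).hom) := by
  have m1 : (U ⊗ (V ⊗ W)) ⊗ X = ((U ⊗ V) ⊗ W) ⊗ X := by simp [hS.assocObj]
  have n : V ⊗ (W ⊗ X) = (V ⊗ W) ⊗ X := (hS.assocObj V W X).symm
  have n1 : U ⊗ (V ⊗ (W ⊗ X)) = U ⊗ ((V ⊗ W) ⊗ X) := by simp [hS.assocObj]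
  have efus : ((U ⊗ V) ⊗ W) ⊗ X = (U ⊗ V) ⊗ (W ⊗ X) := by simp [hS.assocObj]
  rw [BIso_hom, BIso_hom, BIso_hom,
    comp_tensor_id, cE_tensor_id _ _ X m1, cE_split e2, cE_cE, cE_self]
  have sw : ((𝟙 U ⊗ₘ (T.D V W).inv) ⊗ₘ 𝟙 X) ≫ (T.D (U ⊗ (V ⊗ W)) X).hom
      = (T.D (U ⊗ (V ⊗ W)) X).hom ≫ ((𝟙 U ⊗ₘ (T.D V W).inv) ⊗ₘ 𝟙 X) :=
    T.nat (𝟙 U ⊗ₘ (T.D V W).inv) (𝟙 X)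
  simp only [Category.assoc]
  rw [reassoc_of% sw, ← D_congr hS T (hS.assocObj U V W).symm rfl m1]
  have front : cE m1 ((T.D (U ⊗ V) W).hom ⊗ₘ 𝟙 X) ≫ cE m1 (T.D ((U ⊗ V) ⊗ W) X).hom
      = cE (m1.trans efus) ((T.D (U ⊗ V) (W ⊗ X)).hom ≫ (𝟙 (U ⊗ V) ⊗ₘ (T.D W X).hom)) := by
    rw [cE_comp, T.nat (T.D (U ⊗ V) W).hom (𝟙 X), T.fus, cE_cE]
  rw [reassoc_of% front, cE_split (m1.trans efus)]
  simp only [Category.assoc]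
  rw [cE_split e1, cE_split e1, cE_split e1, cE_cE, cE_cE, cE_cE]
  congr 1
  rw [fus_inv hS T V W X n, id_tensor_comp, id_tensor_comp,
    id_tensor_cE U n _ n1, id_tensor_cE U n _ n1,
    ← id_tensorHom_id, cE_assoc3' hS (𝟙 U) (𝟙 V) (T.D W X).hom _,
    ← cE_cE n1 ((hS.assocObj U (V ⊗ W) X).symm),
    cE_assoc3' hS (𝟙 U) (T.D V W).inv (𝟙 X) ((hS.assocObj U (V ⊗ W) X).symm)]

end Tw3
end SAux


lemma grp_comm {G : Type*} [Group G] (p q s t u e w : G)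
    (hqs : q*s = s*q) (hue : u*e = e*u) (hpe : p*e = e*p)
    (hF1 : e*u = s*t) (hF5 : q*w = e*p) (hE : w*e⁻¹*t = t*e⁻¹*w) :
    (s⁻¹*u)*(q⁻¹*p) = (q⁻¹*p)*(s⁻¹*u) := by
  have he : e = s*t*u⁻¹ := by rw [← hF1]; group
  have hw : w = q⁻¹*(e*p) := by rw [← hF5]; group
  have hpe' : p*e⁻¹ = e⁻¹*p := (Commute.inv_right hpe).eq
  have hqs1 : q⁻¹*s = s*q⁻¹ := (Commute.inv_left hqs).eq
  have hqs' : s⁻¹*q⁻¹*s = q⁻¹ := by rw [mul_assoc, hqs1]; group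
  have hqs2 : s*q⁻¹ = q⁻¹*s := hqs1.symm
  have hust : u*(s*t) = (s*t)*u := by
    have h0 : u*(s*t*u⁻¹) = (s*t*u⁻¹)*u := by rw [← he]; exact hue
    calc u*(s*t) = (u*(s*t*u⁻¹))*u := by group
      _ = ((s*t*u⁻¹)*u)*u := by rw [h0]
      _ = (s*t)*u := by group
  have hust' : u⁻¹*(s*t) = (s*t)*u⁻¹ := (Commute.inv_left hust).eq
  have huinv : u⁻¹*(s*t)⁻¹ = (s*t)⁻¹*u⁻¹ := (Commute.inv_left (Commute.inv_right hust)).eq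
  have hpst : p*(s*t*u⁻¹) = (s*t*u⁻¹)*p := by rw [← he]; exact hpe
  have h1 : w*e⁻¹*t = q⁻¹*p*t := by
    rw [hw]
    calc (q⁻¹*(e*p))*e⁻¹*t = (q⁻¹*e)*(p*e⁻¹)*t := by group
      _ = (q⁻¹*e)*(e⁻¹*p)*t := by rw [hpe']
      _ = q⁻¹*p*t := by group
  have d0 : q⁻¹*p*t = t*e⁻¹*q⁻¹*e*p := by
    rw [← h1, hE, hw]; group
  have d1 : q⁻¹*p*t = t*u*t⁻¹*q⁻¹*t*u⁻¹*p := by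
    calc q⁻¹*p*t = t*e⁻¹*q⁻¹*e*p := d0
      _ = t*(u*t⁻¹)*(s⁻¹*q⁻¹*s)*(t*u⁻¹)*p := by rw [he]; group
      _ = t*(u*t⁻¹)*q⁻¹*(t*u⁻¹)*p := by rw [hqs']
      _ = t*u*t⁻¹*q⁻¹*t*u⁻¹*p := by group
  have d2 : q⁻¹*p = (t*u*t⁻¹*q⁻¹*t*u⁻¹*p)*t⁻¹ := by rw [← d1]; group
  have key : u⁻¹*(s*(q⁻¹*p)*s⁻¹)*u = q⁻¹*p := by
    calc u⁻¹*(s*(q⁻¹*p)*s⁻¹)*u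
        = u⁻¹*(s*((t*u*t⁻¹*q⁻¹*t*u⁻¹*p)*t⁻¹)*s⁻¹)*u := by rw [← d2]
      _ = (u⁻¹*(s*t))*(u*t⁻¹*q⁻¹*t*u⁻¹*p*t⁻¹*s⁻¹*u) := by group
      _ = ((s*t)*u⁻¹)*(u*t⁻¹*q⁻¹*t*u⁻¹*p*t⁻¹*s⁻¹*u) := by rw [hust']
      _ = (s*q⁻¹)*(t*u⁻¹*p*t⁻¹*s⁻¹*u) := by group
      _ = (q⁻¹*s)*(t*u⁻¹*p*t⁻¹*s⁻¹*u) := by rw [hqs2]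
      _ = q⁻¹*((s*t*u⁻¹)*p)*(t⁻¹*s⁻¹*u) := by group
      _ = q⁻¹*(p*(s*t*u⁻¹))*(t⁻¹*s⁻¹*u) := by rw [← hpst]
      _ = (q⁻¹*p)*((s*t)*(u⁻¹*(s*t)⁻¹)*u) := by group
      _ = (q⁻¹*p)*((s*t)*((s*t)⁻¹*u⁻¹)*u) := by rw [huinv]
      _ = q⁻¹*p := by group
  calc (s⁻¹*u)*(q⁻¹*p) = (s⁻¹*u)*(u⁻¹*(s*(q⁻¹*p)*s⁻¹)*u) := by rw [key]
    _ = (q⁻¹*p)*(s⁻¹*u) := by group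

namespace SAux

/-- Transport of an automorphism along an object equality. -/
def cEAut {A B : C} (h : A = B) (f : B ≅ B) : A ≅ A where
  hom := cE h f.hom
  inv := cE h f.inv
  hom_inv_id := by rw [cE_comp, Iso.hom_inv_id, cE_id]
  inv_hom_id := by rw [cE_comp, Iso.inv_hom_id, cE_id]

/-- Left-whiskered automorphism. -/
def idTIso (X : C) {Y : C} (f : Y ≅ Y) : X ⊗ Y ≅ X ⊗ Y where
  hom := 𝟙 X ⊗ₘ f.hom
  inv := 𝟙 X ⊗ₘ f.inv
  hom_inv_id := by rw [← id_tensor_comp, Iso.hom_inv_id, id_tensorHom_id]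
  inv_hom_id := by rw [← id_tensor_comp, Iso.inv_hom_id, id_tensorHom_id]

/-- Right-whiskered automorphism. -/
def tIdIso {Y : C} (f : Y ≅ Y) (X : C) : Y ⊗ X ≅ Y ⊗ X where
  hom := f.hom ⊗ₘ 𝟙 X
  inv := f.inv ⊗ₘ 𝟙 X
  hom_inv_id := by rw [← comp_tensor_id, Iso.hom_inv_id, id_tensorHom_id]
  inv_hom_id := by rw [← comp_tensor_id, Iso.inv_hom_id, id_tensorHom_id]

section Cab
variable (hS : MonStrict C) (T : Twine C hS) (U V W X : C)

def gS : Aut (U ⊗ (V ⊗ (W ⊗ X))) := idTIso U (idTIso V (T.D W X))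
def gT : Aut (U ⊗ (V ⊗ (W ⊗ X))) := idTIso U (T.D V (W ⊗ X))
def gU : Aut (U ⊗ (V ⊗ (W ⊗ X))) :=
  cEAut (by simp [hS.assocObj]) (idTIso U (T.D (V ⊗ W) X))
def gE : Aut (U ⊗ (V ⊗ (W ⊗ X))) :=
  cEAut (by simp [hS.assocObj]) (idTIso U (tIdIso (T.D V W) X))
def gP : Aut (U ⊗ (V ⊗ (W ⊗ X))) :=
  cEAut (by simp [hS.assocObj]) (tIdIso (T.D U (V ⊗ W)) X)
def gQ : Aut (U ⊗ (V ⊗ (W ⊗ X))) :=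
  cEAut (by simp [hS.assocObj]) (tIdIso (T.D U V) (W ⊗ X))
def gW : Aut (U ⊗ (V ⊗ (W ⊗ X))) :=
  cEAut (by simp [hS.assocObj]) (tIdIso (T.D (U ⊗ V) W) X)

lemma gS_hom : (gS hS T U V W X).hom = 𝟙 U ⊗ₘ (𝟙 V ⊗ₘ (T.D W X).hom) := rfl
lemma gS_inv : (gS hS T U V W X).inv = 𝟙 U ⊗ₘ (𝟙 V ⊗ₘ (T.D W X).inv) := rfl
lemma gT_hom : (gT hS T U V W X).hom = 𝟙 U ⊗ₘ (T.D V (W ⊗ X)).hom := rfl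
lemma gU_hom : (gU hS T U V W X).hom
    = cE (by simp [hS.assocObj]) (𝟙 U ⊗ₘ (T.D (V ⊗ W) X).hom) := rfl
lemma gE_hom : (gE hS T U V W X).hom
    = cE (by simp [hS.assocObj]) (𝟙 U ⊗ₘ ((T.D V W).hom ⊗ₘ 𝟙 X)) := rfl
lemma gE_inv : (gE hS T U V W X).inv
    = cE (by simp [hS.assocObj]) (𝟙 U ⊗ₘ ((T.D V W).inv ⊗ₘ 𝟙 X)) := rfl
lemma gP_hom : (gP hS T U V W X).hom
    = cE (by simp [hS.assocObj]) ((T.D U (V ⊗ W)).hom ⊗ₘ 𝟙 X) := rfl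
lemma gQ_hom : (gQ hS T U V W X).hom
    = cE (by simp [hS.assocObj]) ((T.D U V).hom ⊗ₘ 𝟙 (W ⊗ X)) := rfl
lemma gQ_inv : (gQ hS T U V W X).inv
    = cE (by simp [hS.assocObj]) ((T.D U V).inv ⊗ₘ 𝟙 (W ⊗ X)) := rfl
lemma gW_hom : (gW hS T U V W X).hom
    = cE (by simp [hS.assocObj]) ((T.D (U ⊗ V) W).hom ⊗ₘ 𝟙 X) := rfl

lemma gS_q : (gS hS T U V W X).hom
    = cE (by simp [hS.assocObj]) (𝟙 (U ⊗ V) ⊗ₘ (T.D W X).hom) := by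
  rw [gS_hom, ← id_tensorHom_id,
    cE_assoc3' hS (𝟙 U) (𝟙 V) (T.D W X).hom (by simp [hS.assocObj])]

lemma gE_p : (gE hS T U V W X).hom
    = cE (by simp [hS.assocObj]) ((𝟙 U ⊗ₘ (T.D V W).hom) ⊗ₘ 𝟙 X) := by
  rw [gE_hom, ← cE_assoc3 hS (𝟙 U) (T.D V W).hom (𝟙 X) (hS.assocObj U (V ⊗ W) X),
    cE_cE]

lemma gQ_w : (gQ hS T U V W X).hom
    = cE (by simp [hS.assocObj]) (((T.D U V).hom ⊗ₘ 𝟙 W) ⊗ₘ 𝟙 X) := by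
  rw [gQ_hom, ← cE_assoc3 hS (T.D U V).hom (𝟙 W) (𝟙 X) (hS.assocObj (U ⊗ V) W X),
    cE_cE, id_tensorHom_id]

lemma rQS : (gS hS T U V W X).hom ≫ (gQ hS T U V W X).hom
    = (gQ hS T U V W X).hom ≫ (gS hS T U V W X).hom := by
  rw [gS_q, gQ_hom, cE_comp, cE_comp, id_tensor_comp_tensor_id,
    tensor_id_comp_id_tensor]

lemma rUE : (gU hS T U V W X).hom ≫ (gE hS T U V W X).hom
    = (gE hS T U V W X).hom ≫ (gU hS T U V W X).hom := by
  rw [gU_hom, gE_hom, cE_comp, cE_comp, ← id_tensor_comp, ← id_tensor_comp,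
    T.nat (T.D V W).hom (𝟙 X)]

lemma rPE : (gP hS T U V W X).hom ≫ (gE hS T U V W X).hom
    = (gE hS T U V W X).hom ≫ (gP hS T U V W X).hom := by
  rw [gP_hom, gE_p, cE_comp, cE_comp, ← comp_tensor_id, ← comp_tensor_id,
    T.nat (𝟙 U) (T.D V W).hom]

lemma rF1 : (gU hS T U V W X).hom ≫ (gE hS T U V W X).hom
    = (gT hS T U V W X).hom ≫ (gS hS T U V W X).hom := by
  rw [gU_hom, gE_hom, gT_hom, gS_hom, cE_comp, ← id_tensor_comp, T.fus V W X,
    id_tensor_cE U _ _ (by simp [hS.assocObj]), cE_cE, cE_self, id_tensor_comp]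

lemma rF5 : (gW hS T U V W X).hom ≫ (gQ hS T U V W X).hom
    = (gP hS T U V W X).hom ≫ (gE hS T U V W X).hom := by
  rw [gW_hom, gQ_w, gP_hom, gE_p, cE_comp, ← comp_tensor_id, T.fus U V W,
    cE_tensor_id _ _ X (by simp [hS.assocObj]), cE_cE, comp_tensor_id, cE_split]

lemma rE : (gT hS T U V W X).hom ≫ (gE hS T U V W X).inv ≫ (gW hS T U V W X).hom
    = (gW hS T U V W X).hom ≫ (gE hS T U V W X).inv ≫ (gT hS T U V W X).hom := by
  have ent := congrArg
    (cE (show U ⊗ (V ⊗ (W ⊗ X)) = ((U ⊗ V) ⊗ W) ⊗ X by simp [hS.assocObj]))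
    (T.ent U V W X)
  rw [cE_split, cE_split, cE_split, cE_split] at ent
  simp only [cE_cE] at ent
  rw [cE_self] at ent
  rw [gT_hom, gE_inv, gW_hom]
  exact ent

set_option maxHeartbeats 1000000 in
lemma lem_cab (e1 : (U ⊗ (V ⊗ W)) ⊗ X = U ⊗ (V ⊗ (W ⊗ X))) :
    cE e1 (𝟙 U ⊗ₘ (BIso hS T V W X).hom) ≫ ((AIso hS T U V W).hom ⊗ₘ 𝟙 X)
    = ((AIso hS T U V W).hom ⊗ₘ 𝟙 X) ≫ cE e1 (𝟙 U ⊗ₘ (BIso hS T V W X).hom) := by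
  have Hqs : gQ hS T U V W X * gS hS T U V W X = gS hS T U V W X * gQ hS T U V W X :=
    Iso.ext (rQS hS T U V W X)
  have Hue : gU hS T U V W X * gE hS T U V W X = gE hS T U V W X * gU hS T U V W X :=
    Iso.ext (rUE hS T U V W X).symm
  have Hpe : gP hS T U V W X * gE hS T U V W X = gE hS T U V W X * gP hS T U V W X :=
    Iso.ext (rPE hS T U V W X).symm
  have HF1 : gE hS T U V W X * gU hS T U V W X = gS hS T U V W X * gT hS T U V W X :=
    Iso.ext (rF1 hS T U V W X)
  have HF5 : gQ hS T U V W X * gW hS T U V W X = gE hS T U V W X * gP hS T U V W X :=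
    Iso.ext (rF5 hS T U V W X)
  have HE : gW hS T U V W X * (gE hS T U V W X)⁻¹ * gT hS T U V W X
      = gT hS T U V W X * (gE hS T U V W X)⁻¹ * gW hS T U V W X :=
    Iso.ext (rE hS T U V W X)
  have key := grp_comm (gP hS T U V W X) (gQ hS T U V W X) (gS hS T U V W X)
    (gT hS T U V W X) (gU hS T U V W X) (gE hS T U V W X) (gW hS T U V W X)
    Hqs Hue Hpe HF1 HF5 HE
  have keyhom : ((gP hS T U V W X).hom ≫ (gQ hS T U V W X).inv) ≫
        ((gU hS T U V W X).hom ≫ (gS hS T U V W X).inv)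
      = ((gU hS T U V W X).hom ≫ (gS hS T U V W X).inv) ≫
        ((gP hS T U V W X).hom ≫ (gQ hS T U V W X).inv) := congrArg Iso.hom key
  have hb : 𝟙 U ⊗ₘ (BIso hS T V W X).hom
      = (gU hS T U V W X).hom ≫ (gS hS T U V W X).inv := by
    rw [BIso_hom, id_tensor_comp, id_tensor_cE U _ _ (by simp [hS.assocObj]),
      gU_hom, gS_inv]
  have ha : (AIso hS T U V W).hom ⊗ₘ 𝟙 X
      = cE e1 ((gP hS T U V W X).hom ≫ (gQ hS T U V W X).inv) := by
    rw [gP_hom, gQ_inv, cE_split, cE_cE, cE_cE, cE_self,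
      A_alt hS T U V W (by simp [hS.assocObj]), comp_tensor_id,
      cE_tensor_id _ _ X (by simp [hS.assocObj]),
      ← cE_assoc3 hS (T.D U V).inv (𝟙 W) (𝟙 X) (hS.assocObj (U ⊗ V) W X),
      id_tensorHom_id, cE_cE]
  rw [hb, ha, cE_comp, cE_comp]
  exact congrArg (cE e1) keyhom.symm

end Cab

end SAux


set_option maxHeartbeats 1000000 in
/-- From a twine `D` on a strict monoidal category, the families
`A_{X,Y,Z} = D_{X⊗Y,Z}(id_X ⊗ D_{Y,Z}⁻¹)` and `B_{X,Y,Z} = (id_X ⊗ D_{Y,Z}⁻¹)D_{X⊗Y,Z}`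
form a pure-braided structure. -/
theorem stmt12 (hS : MonStrict C) (T : Twine C hS) :
    ∃ P : PureBraided C hS,
      (∀ X Y Z : C, (P.A X Y Z).hom =
        (𝟙 X ⊗ₘ (T.D Y Z).inv) ≫ cE (by simp [hS.assocObj]) (T.D (X ⊗ Y) Z).hom) ∧
      (∀ X Y Z : C, (P.B X Y Z).hom =
        cE (by simp [hS.assocObj]) (T.D (X ⊗ Y) Z).hom ≫ (𝟙 X ⊗ₘ (T.D Y Z).inv)) := by
  refine ⟨⟨fun U V W => SAux.AIso hS T U V W, fun U V W => SAux.BIso hS T U V W,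
    fun f g h => SAux.lem_natA hS T f g h,
    fun f g h => SAux.lem_natB hS T f g h,
    fun U V W X => SAux.lem_a1 hS T U V W X _ _,
    fun U V W X => SAux.lem_a2 hS T U V W X _ _,
    fun U V W X => SAux.lem_baba hS T U V W X _ _,
    fun U V W X => SAux.lem_b2 hS T U V W X _ _,
    fun U V W X => SAux.lem_cab hS T U V W X _,
    fun U V => SAux.lem_t1t hS T U V⟩,
    fun X Y Z => rfl, fun X Y Z => rfl⟩
end

section
/- Let C be a strict monoidal category and T a strong twine on C, i.e. a natural isomorphism T_{U,V}: U⊗V → U⊗V with T_{I,I} = id_I, (T_{U,V}⊗id_W)T_{U⊗V,W} = (id_U⊗T_{V,W})T_{U,V⊗W}, and (T_{U,V}⊗id_W)(id_U⊗T_{V,W}) = (id_U⊗T_{V,W})(T_{U,V}⊗id_W). Then T satisfies (T_{U,V}⊗id_{W⊗X})(id_U⊗T_{V⊗W,X}) = (id_U⊗T_{V⊗W,X})(T_{U,V}⊗id_{W⊗X}) for all objects U,V,W,X. -/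
open CategoryTheory MonoidalCategory

universe v u

variable {C : Type u} [Category.{v} C] [MonoidalCategory C]

set_option linter.unusedSectionVars false

theorem tensor_eqToHom' {X Y X' Y' : C} (h : X = X') (h' : Y = Y') :
    (eqToHom h ⊗ₘ eqToHom h') = eqToHom (by rw [h, h'] : X ⊗ Y = X' ⊗ Y') := by
  subst h; subst h'; simp [id_tensorHom_id]

theorem cE_comp' {X Y : C} (h : X = Y) (f g : Y ⟶ Y) :
    cE h (f ≫ g) = cE h f ≫ cE h g := by simp [cE]

theorem id_tensor_cE' {U X Y : C} (h : X = Y) (f : Y ⟶ Y) :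
    (𝟙 U ⊗ₘ cE h f) = cE (by rw [h]) (𝟙 U ⊗ₘ f) := by
  subst h; simp [cE]

theorem cE_cE' {X Y Z : C} (h : X = Y) (h' : Y = Z) (f : Z ⟶ Z) :
    cE h (cE h' f) = cE (h.trans h') f := by
  subst h'; simp [cE]

theorem cE_mid (hS : MonStrict C) (U V : C) {Z : C} (f : Z ⟶ Z)
    (h : (U ⊗ V) ⊗ Z = U ⊗ (V ⊗ Z)) :
    cE h (𝟙 U ⊗ₘ (𝟙 V ⊗ₘ f)) = (𝟙 (U ⊗ V) ⊗ₘ f) := by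
  have n := associator_naturality (𝟙 U) (𝟙 V) f
  rw [hS.assocHom, id_tensorHom_id] at n
  rw [cE]
  have : eqToHom h = eqToHom (hS.assocObj U V Z) := rfl
  rw [this, ← Category.assoc, ← n]
  simp

theorem cE_tensor_id {X Y : C} (h : X = Y) (Z : C) (f : Y ⟶ Y) :
    (cE h f ⊗ₘ 𝟙 Z) = cE (by rw [h]) (f ⊗ₘ 𝟙 Z) := by
  subst h; simp [cE]

theorem cE_left (hS : MonStrict C) {U V : C} (W X : C) (f : U ⊗ V ⟶ U ⊗ V)
    (n : (U ⊗ V) ⊗ (W ⊗ X) = ((U ⊗ V) ⊗ W) ⊗ X) :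
    cE n ((f ⊗ₘ 𝟙 W) ⊗ₘ 𝟙 X) = f ⊗ₘ 𝟙 (W ⊗ X) := by
  have nn := associator_naturality f (𝟙 W) (𝟙 X)
  rw [hS.assocHom, id_tensorHom_id] at nn
  rw [cE]
  have e : eqToHom n.symm = eqToHom (hS.assocObj (U ⊗ V) W X) := rfl
  rw [e, nn, ← Category.assoc]
  simp

theorem cE_assoc_conj (hS : MonStrict C) {U V W X : C} (g : V ⊗ W ⟶ V ⊗ W)
    (h : (U ⊗ V) ⊗ (W ⊗ X) = U ⊗ ((V ⊗ W) ⊗ X))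
    (q : (U ⊗ V) ⊗ (W ⊗ X) = (U ⊗ (V ⊗ W)) ⊗ X) :
    cE q ((𝟙 U ⊗ₘ g) ⊗ₘ 𝟙 X) = cE h (𝟙 U ⊗ₘ (g ⊗ₘ 𝟙 X)) := by
  have nn := associator_naturality (𝟙 U) g (𝟙 X)
  rw [hS.assocHom] at nn
  rw [cE, cE]
  have e : eqToHom q.symm = eqToHom (hS.assocObj U (V ⊗ W) X) ≫ eqToHom h.symm := by
    simp
  rw [e, ← Category.assoc ((𝟙 U ⊗ₘ g) ⊗ₘ 𝟙 X), nn]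
  simp

theorem comm_swap {P : C} {p p' q : P ⟶ P} (h1 : p ≫ p' = 𝟙 P) (h2 : p' ≫ p = 𝟙 P)
    (hc : p ≫ q = q ≫ p) : p' ≫ q = q ≫ p' := by
  calc p' ≫ q = p' ≫ q ≫ 𝟙 P := by simp
  _ = p' ≫ q ≫ p ≫ p' := by rw [h1]
  _ = p' ≫ (q ≫ p) ≫ p' := by simp
  _ = p' ≫ (p ≫ q) ≫ p' := by rw [hc]
  _ = (p' ≫ p) ≫ q ≫ p' := by simp
  _ = q ≫ p' := by rw [h2]; simp

set_option maxHeartbeats 2000000 in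
/-- For a strong twine `T`, one has
`(T_{U,V} ⊗ id_{W⊗X})(id_U ⊗ T_{V⊗W,X}) = (id_U ⊗ T_{V⊗W,X})(T_{U,V} ⊗ id_{W⊗X})`. -/
theorem stmt13 (hS : MonStrict C) (T : StrongTwine C hS) (U V W X : C) :
    cE (by simp [hS.assocObj]) (𝟙 U ⊗ₘ (T.D (V ⊗ W) X).hom) ≫
      ((T.D U V).hom ⊗ₘ 𝟙 (W ⊗ X))
    = ((T.D U V).hom ⊗ₘ 𝟙 (W ⊗ X)) ≫
        cE (by simp [hS.assocObj]) (𝟙 U ⊗ₘ (T.D (V ⊗ W) X).hom) := by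
  have h : (U ⊗ V) ⊗ (W ⊗ X) = U ⊗ ((V ⊗ W) ⊗ X) := by simp [hS.assocObj]
  have k : (U ⊗ V) ⊗ (W ⊗ X) = U ⊗ (V ⊗ (W ⊗ X)) := by simp [hS.assocObj]
  have h1 : (V ⊗ W) ⊗ X = V ⊗ (W ⊗ X) := hS.assocObj V W X
  have h2 : (U ⊗ V) ⊗ W = U ⊗ (V ⊗ W) := hS.assocObj U V W
  have n : (U ⊗ V) ⊗ (W ⊗ X) = ((U ⊗ V) ⊗ W) ⊗ X := (hS.assocObj (U ⊗ V) W X).symm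
  have e0 : ((T.D V W).hom ⊗ₘ 𝟙 X) ≫ ((T.D V W).inv ⊗ₘ 𝟙 X) = 𝟙 _ := by
    rw [tensorHom_comp_tensorHom]; simp [id_tensorHom_id]
  have hD : (T.D (V ⊗ W) X).hom
      = cE h1 ((T.D V (W ⊗ X)).hom ≫ (𝟙 V ⊗ₘ (T.D W X).hom)) ≫ ((T.D V W).inv ⊗ₘ 𝟙 X) := by
    conv_lhs => rw [← Category.comp_id (T.D (V ⊗ W) X).hom, ← e0, ← Category.assoc]
    rw [T.fus V W X]
  have hb : cE h (𝟙 U ⊗ₘ (T.D (V ⊗ W) X).hom)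
      = cE k (𝟙 U ⊗ₘ (T.D V (W ⊗ X)).hom) ≫ cE k (𝟙 U ⊗ₘ (𝟙 V ⊗ₘ (T.D W X).hom))
        ≫ cE h (𝟙 U ⊗ₘ ((T.D V W).inv ⊗ₘ 𝟙 X)) := by
    rw [hD, id_tensor_comp, id_tensor_cE', id_tensor_comp, cE_comp', cE_cE', cE_comp']
    simp only [Category.assoc]
  have c1 : cE k (𝟙 U ⊗ₘ (T.D V (W ⊗ X)).hom) ≫ ((T.D U V).hom ⊗ₘ 𝟙 (W ⊗ X))
      = ((T.D U V).hom ⊗ₘ 𝟙 (W ⊗ X)) ≫ cE k (𝟙 U ⊗ₘ (T.D V (W ⊗ X)).hom) :=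
    T.comm U V (W ⊗ X)
  have c2 : cE k (𝟙 U ⊗ₘ (𝟙 V ⊗ₘ (T.D W X).hom)) ≫ ((T.D U V).hom ⊗ₘ 𝟙 (W ⊗ X))
      = ((T.D U V).hom ⊗ₘ 𝟙 (W ⊗ X)) ≫ cE k (𝟙 U ⊗ₘ (𝟙 V ⊗ₘ (T.D W X).hom)) := by
    rw [cE_mid hS U V (T.D W X).hom k, tensorHom_comp_tensorHom, tensorHom_comp_tensorHom]
    simp
  have i1 : cE h2 (𝟙 U ⊗ₘ (T.D V W).hom) ≫ cE h2 (𝟙 U ⊗ₘ (T.D V W).inv) = 𝟙 _ := by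
    rw [← cE_comp', tensorHom_comp_tensorHom]; simp [cE]
  have i2 : cE h2 (𝟙 U ⊗ₘ (T.D V W).inv) ≫ cE h2 (𝟙 U ⊗ₘ (T.D V W).hom) = 𝟙 _ := by
    rw [← cE_comp', tensorHom_comp_tensorHom]; simp [cE]
  have cc' := comm_swap i1 i2 (T.comm U V W)
  have w := congrArg (fun t : (U ⊗ V) ⊗ W ⟶ (U ⊗ V) ⊗ W => cE n (t ⊗ₘ 𝟙 X)) cc'
  simp only [comp_tensor_id, cE_comp'] at w
  rw [cE_left hS W X (T.D U V).hom n, cE_tensor_id, cE_cE',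
    cE_assoc_conj hS (T.D V W).inv h] at w
  show cE h (𝟙 U ⊗ₘ (T.D (V ⊗ W) X).hom) ≫ ((T.D U V).hom ⊗ₘ 𝟙 (W ⊗ X))
    = ((T.D U V).hom ⊗ₘ 𝟙 (W ⊗ X)) ≫ cE h (𝟙 U ⊗ₘ (T.D (V ⊗ W) X).hom)
  have c1r := reassoc_of% c1
  have c2r := reassoc_of% c2
  rw [hb]
  simp only [Category.assoc]
  rw [w, c2r, c1r]
end

section
/- Let H be a Hopf algebra and γ ∈ Reg¹(H) satisfying γ(ab₁)b₂ = γ(ab₂)b₁ for all a,b ∈ H. Then γ is lazy (γ(h₁)h₂ = h₁γ(h₂)) and neat (γ(ab₁)γ(b₂c) = γ(b₁c)γ(ab₂) for all a,b,c ∈ H). -/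
open TensorProduct

noncomputable section

universe u

section Defs

variable {k : Type u} [CommRing k] {H : Type u} [Ring H] [Bialgebra k H]

/-- Convolution product on the dual of a coalgebra. -/
def conv {C : Type u} [AddCommGroup C] [Module k C] [Coalgebra k C]
    (f g : C →ₗ[k] k) : C →ₗ[k] k :=
  LinearMap.mul' k k ∘ₗ TensorProduct.map f g ∘ₗ Coalgebra.comul

/-- `a ⊗ b ↦ a · ε(b)`. -/
def pr1 : H ⊗[k] H →ₗ[k] H :=
  (TensorProduct.rid k H).toLinearMap ∘ₗ TensorProduct.map LinearMap.id Coalgebra.counit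

/-- `a ⊗ (b ⊗ c) ↦ ε(a) · (b ⊗ c)`. -/
def dropL3 : H ⊗[k] (H ⊗[k] H) →ₗ[k] H ⊗[k] H :=
  (TensorProduct.lid k (H ⊗[k] H)).toLinearMap ∘ₗ TensorProduct.map Coalgebra.counit LinearMap.id

/-- Multiplication of `H` as a linear map `H ⊗ H → H`. -/
def mulH : H ⊗[k] H →ₗ[k] H := LinearMap.mul' k H

/-- `σ` is normalized: `σ(1,h) = ε(h) = σ(h,1)`. -/
def Normalized (σ : H ⊗[k] H →ₗ[k] k) : Prop :=
  ∀ h : H, σ (1 ⊗ₜ[k] h) = Coalgebra.counit (R := k) h ∧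
    σ (h ⊗ₜ[k] 1) = Coalgebra.counit (R := k) h

/-- Left 2-cocycle condition: `σ(a₁,b₁)σ(a₂b₂,c) = σ(b₁,c₁)σ(a,b₂c₂)`, expressed as an
equality of linear functionals on `H ⊗ (H ⊗ H)` (convolution of the indicated factors). -/
def IsLeftCocycle (σ : H ⊗[k] H →ₗ[k] k) : Prop :=
  conv (σ ∘ₗ TensorProduct.map LinearMap.id pr1)
      (σ ∘ₗ TensorProduct.map mulH LinearMap.id ∘ₗ (TensorProduct.assoc k H H H).symm.toLinearMap)
  = conv (σ ∘ₗ dropL3) (σ ∘ₗ TensorProduct.map LinearMap.id mulH)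

/-- Right 2-cocycle condition: `σ(a₁b₁,c)σ(a₂,b₂) = σ(a,b₁c₁)σ(b₂,c₂)`. -/
def IsRightCocycle (σ : H ⊗[k] H →ₗ[k] k) : Prop :=
  conv (σ ∘ₗ TensorProduct.map mulH LinearMap.id ∘ₗ (TensorProduct.assoc k H H H).symm.toLinearMap)
      (σ ∘ₗ TensorProduct.map LinearMap.id pr1)
  = conv (σ ∘ₗ TensorProduct.map LinearMap.id mulH) (σ ∘ₗ dropL3)

/-- Laziness for `σ : H ⊗ H → k`: `σ(h₁,h'₁)h₂h'₂ = h₁h'₁σ(h₂,h'₂)`. -/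
def IsLazy2 (σ : H ⊗[k] H →ₗ[k] k) : Prop :=
  (TensorProduct.lid k H).toLinearMap ∘ₗ TensorProduct.map σ mulH ∘ₗ Coalgebra.comul
  = (TensorProduct.rid k H).toLinearMap ∘ₗ TensorProduct.map mulH σ ∘ₗ Coalgebra.comul

/-- Laziness for `γ : H → k`: `γ(h₁)h₂ = h₁γ(h₂)`. -/
def IsLazy1 (γ : H →ₗ[k] k) : Prop :=
  (TensorProduct.lid k H).toLinearMap ∘ₗ TensorProduct.map γ LinearMap.id ∘ₗ Coalgebra.comul
  = (TensorProduct.rid k H).toLinearMap ∘ₗ TensorProduct.map LinearMap.id γ ∘ₗ Coalgebra.comul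

/-- Neatness: `σ(a,b₁)σ(b₂,c) = σ(b₁,c)σ(a,b₂)`. -/
def Neat2 (σ : H ⊗[k] H →ₗ[k] k) : Prop :=
  conv (σ ∘ₗ TensorProduct.map LinearMap.id pr1) (σ ∘ₗ dropL3)
  = conv (σ ∘ₗ dropL3) (σ ∘ₗ TensorProduct.map LinearMap.id pr1)

/-- `a ⊗ (b ⊗ (c ⊗ d)) ↦ ε(a) (b ⊗ (c ⊗ d))`. -/
def dropL4 : H ⊗[k] (H ⊗[k] (H ⊗[k] H)) →ₗ[k] H ⊗[k] (H ⊗[k] H) :=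
  (TensorProduct.lid k (H ⊗[k] (H ⊗[k] H))).toLinearMap ∘ₗ
    TensorProduct.map Coalgebra.counit LinearMap.id

/-- `(a,b,c,d) ↦ σ(ab, c) ε(d)`. -/
def fPure (σ : H ⊗[k] H →ₗ[k] k) : H ⊗[k] (H ⊗[k] (H ⊗[k] H)) →ₗ[k] k :=
  σ ∘ₗ TensorProduct.map mulH LinearMap.id ∘ₗ (TensorProduct.assoc k H H H).symm.toLinearMap ∘ₗ
    TensorProduct.map LinearMap.id (TensorProduct.map LinearMap.id pr1)

/-- `(a,b,c,d) ↦ ε(a) τ(b, c) ε(d)`. -/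
def gPure (τ : H ⊗[k] H →ₗ[k] k) : H ⊗[k] (H ⊗[k] (H ⊗[k] H)) →ₗ[k] k :=
  τ ∘ₗ TensorProduct.map LinearMap.id pr1 ∘ₗ dropL4

/-- `(a,b,c,d) ↦ ε(a) σ(b, cd)`. -/
def hPure (σ : H ⊗[k] H →ₗ[k] k) : H ⊗[k] (H ⊗[k] (H ⊗[k] H)) →ₗ[k] k :=
  σ ∘ₗ TensorProduct.map LinearMap.id mulH ∘ₗ dropL4

/-- Purity for a map `σ` with convolution inverse `τ = σ⁻¹`:
`σ(ab₁,c₁)σ⁻¹(b₂,c₂)σ(b₃,c₃d) = σ(b₁,c₁d)σ⁻¹(b₂,c₂)σ(ab₃,c₃)`. -/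
def Pure2 (σ τ : H ⊗[k] H →ₗ[k] k) : Prop :=
  conv (C := H ⊗[k] (H ⊗[k] (H ⊗[k] H))) (conv (fPure σ) (gPure τ)) (hPure σ)
  = conv (C := H ⊗[k] (H ⊗[k] (H ⊗[k] H))) (conv (hPure σ) (gPure τ)) (fPure σ)

/-- `D¹(γ)(h,h') = γ(h₁)γ(h'₁)γinv(h₂h'₂)` where `γinv` is the convolution inverse of `γ`. -/
def D1 (γ γinv : H →ₗ[k] k) : H ⊗[k] H →ₗ[k] k :=
  conv (LinearMap.mul' k k ∘ₗ TensorProduct.map γ γ) (γinv ∘ₗ mulH)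

/-- The deformed product `h ·σ h' = σ(h₁,h'₁) h₂h'₂`. -/
def mulSig (σ : H ⊗[k] H →ₗ[k] k) : H ⊗[k] H →ₗ[k] H :=
  (TensorProduct.lid k H).toLinearMap ∘ₗ TensorProduct.map σ mulH ∘ₗ Coalgebra.comul

/-- Neatness for `γ : H → k`: `γ(ab₁)γ(b₂c) = γ(b₁c)γ(ab₂)`. -/
def Neat1 (γ : H →ₗ[k] k) : Prop :=
  conv (γ ∘ₗ mulH ∘ₗ TensorProduct.map LinearMap.id pr1) (γ ∘ₗ mulH ∘ₗ dropL3)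
  = conv (γ ∘ₗ mulH ∘ₗ dropL3) (γ ∘ₗ mulH ∘ₗ TensorProduct.map LinearMap.id pr1)

/-- `γ ∈ Reg¹(H)`: normalized and convolution invertible. -/
def Reg1 (γ : H →ₗ[k] k) : Prop :=
  γ 1 = 1 ∧ ∃ δ : H →ₗ[k] k, conv γ δ = (Coalgebra.counit : H →ₗ[k] k) ∧
    conv δ γ = (Coalgebra.counit : H →ₗ[k] k)

/-- `σ ∈ Reg²(H)`: normalized and convolution invertible. -/
def Reg2 (σ : H ⊗[k] H →ₗ[k] k) : Prop :=
  Normalized σ ∧ ∃ τ : H ⊗[k] H →ₗ[k] k,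
    conv σ τ = (Coalgebra.counit : H ⊗[k] H →ₗ[k] k) ∧
    conv τ σ = (Coalgebra.counit : H ⊗[k] H →ₗ[k] k)

/-- `a ⊗ b ↦ γ(a b₁) b₂`. -/
def stmt17L (γ : H →ₗ[k] k) : H ⊗[k] H →ₗ[k] H :=
  (TensorProduct.lid k H).toLinearMap ∘ₗ TensorProduct.map (γ ∘ₗ mulH) LinearMap.id ∘ₗ
    (TensorProduct.assoc k H H H).symm.toLinearMap ∘ₗ
      TensorProduct.map LinearMap.id Coalgebra.comul

/-- `a ⊗ b ↦ γ(a b₂) b₁`. -/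
def stmt17R (γ : H →ₗ[k] k) : H ⊗[k] H →ₗ[k] H :=
  (TensorProduct.lid k H).toLinearMap ∘ₗ TensorProduct.map (γ ∘ₗ mulH) LinearMap.id ∘ₗ
    (TensorProduct.assoc k H H H).symm.toLinearMap ∘ₗ
      TensorProduct.map LinearMap.id
        ((TensorProduct.comm k H H).toLinearMap ∘ₗ Coalgebra.comul)

end Defs

section AuxLemmas
open Coalgebra
variable {k : Type u} [CommRing k] {H : Type u} [Ring H] [Bialgebra k H]

lemma stmt17L_apply (γ : H →ₗ[k] k) (a b : H) (rb : Coalgebra.Repr k b (H × H)) :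
    stmt17L γ (a ⊗ₜ[k] b) = ∑ i ∈ rb.index, γ (a * rb.left i) • rb.right i := by
  simp only [stmt17L, LinearMap.comp_apply, TensorProduct.map_tmul, LinearMap.id_apply,
    ← rb.eq, tmul_sum, map_sum]
  simp [mulH, LinearMap.mul'_apply]

lemma stmt17R_apply (γ : H →ₗ[k] k) (a b : H) (rb : Coalgebra.Repr k b (H × H)) :
    stmt17R γ (a ⊗ₜ[k] b) = ∑ i ∈ rb.index, γ (a * rb.right i) • rb.left i := by
  simp only [stmt17R, LinearMap.comp_apply, TensorProduct.map_tmul, LinearMap.id_apply,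
    ← rb.eq, tmul_sum, map_sum]
  simp [mulH, LinearMap.mul'_apply]

lemma sum_counit_right_smul_left {a : H} (r : Coalgebra.Repr k a (H × H)) :
    ∑ i ∈ r.index, Coalgebra.counit (R := k) (r.right i) • r.left i = a := by
  have := congrArg (TensorProduct.rid k H) (Coalgebra.sum_tmul_counit_eq r)
  simp only [map_sum, rid_tmul] at this
  simpa using this

lemma sum_counit_left_smul_right {a : H} (r : Coalgebra.Repr k a (H × H)) :
    ∑ i ∈ r.index, Coalgebra.counit (R := k) (r.left i) • r.right i = a := by
  have := congrArg (TensorProduct.lid k H) (Coalgebra.sum_counit_tmul_eq r)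
  simp only [map_sum, lid_tmul] at this
  simpa using this

lemma key1 (γ : H →ₗ[k] k) {a : H} (r : Coalgebra.Repr k a (H × H)) (x : H) :
    ∑ i ∈ r.index, Coalgebra.counit (R := k) (r.right i) * γ (r.left i * x) = γ (a * x) := by
  have h := congrArg (γ ∘ₗ LinearMap.mulRight k x) (sum_counit_right_smul_left r)
  simpa [map_sum, smul_eq_mul] using h

lemma key2 (γ : H →ₗ[k] k) {a : H} (r : Coalgebra.Repr k a (H × H)) (x : H) :
    ∑ i ∈ r.index, Coalgebra.counit (R := k) (r.left i) * γ (r.right i * x) = γ (a * x) := by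
  have h := congrArg (γ ∘ₗ LinearMap.mulRight k x) (sum_counit_left_smul_right r)
  simpa [map_sum, smul_eq_mul] using h

lemma key3 (γ : H →ₗ[k] k) {a : H} (r : Coalgebra.Repr k a (H × H)) (x : H) :
    ∑ i ∈ r.index, Coalgebra.counit (R := k) (r.left i) * γ (x * r.right i) = γ (x * a) := by
  have h := congrArg (γ ∘ₗ LinearMap.mulLeft k x) (sum_counit_left_smul_right r)
  simpa [map_sum, smul_eq_mul] using h

lemma key4 (γ : H →ₗ[k] k) {a : H} (r : Coalgebra.Repr k a (H × H)) (x : H) :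
    ∑ i ∈ r.index, Coalgebra.counit (R := k) (r.right i) * γ (x * r.left i) = γ (x * a) := by
  have h := congrArg (γ ∘ₗ LinearMap.mulLeft k x) (sum_counit_right_smul_left r)
  simpa [map_sum, smul_eq_mul] using h

lemma conv3_apply (f g : H ⊗[k] (H ⊗[k] H) →ₗ[k] k) (a b c : H)
    (ra : Coalgebra.Repr k a (H × H)) (rb : Coalgebra.Repr k b (H × H)) (rc : Coalgebra.Repr k c (H × H)) :
    conv f g (a ⊗ₜ[k] (b ⊗ₜ[k] c)) =
      ∑ i ∈ ra.index, ∑ j ∈ rb.index, ∑ l ∈ rc.index,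
        f (ra.left i ⊗ₜ[k] (rb.left j ⊗ₜ[k] rc.left l)) *
          g (ra.right i ⊗ₜ[k] (rb.right j ⊗ₜ[k] rc.right l)) := by
  have hc : Coalgebra.comul (R := k) (a ⊗ₜ[k] (b ⊗ₜ[k] c)) =
      ∑ i ∈ ra.index, ∑ j ∈ rb.index, ∑ l ∈ rc.index,
        (ra.left i ⊗ₜ[k] (rb.left j ⊗ₜ[k] rc.left l)) ⊗ₜ[k]
          (ra.right i ⊗ₜ[k] (rb.right j ⊗ₜ[k] rc.right l)) := by
    have hbc : Coalgebra.comul (R := k) (b ⊗ₜ[k] c) =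
        ∑ j ∈ rb.index, ∑ l ∈ rc.index,
          (rb.left j ⊗ₜ[k] rc.left l) ⊗ₜ[k] (rb.right j ⊗ₜ[k] rc.right l) := by
      rw [TensorProduct.comul_tmul,
        ← rb.eq, ← rc.eq]
      rw [sum_tmul]
      simp [tmul_sum, map_sum]
    rw [TensorProduct.comul_tmul, hbc,
      ← ra.eq]
    rw [sum_tmul]
    simp [tmul_sum, map_sum]
  rw [conv, LinearMap.comp_apply, LinearMap.comp_apply, hc]
  simp only [map_sum, map_tmul, LinearMap.mul'_apply]

lemma fval (γ : H →ₗ[k] k) (x y z : H) :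
    (γ ∘ₗ mulH ∘ₗ TensorProduct.map LinearMap.id pr1) (x ⊗ₜ[k] (y ⊗ₜ[k] z)) =
      Coalgebra.counit (R := k) z * γ (x * y) := by
  simp [pr1, mulH, LinearMap.mul'_apply, tmul_smul, smul_eq_mul]

lemma gval (γ : H →ₗ[k] k) (x y z : H) :
    (γ ∘ₗ mulH ∘ₗ dropL3) (x ⊗ₜ[k] (y ⊗ₜ[k] z)) =
      Coalgebra.counit (R := k) x * γ (y * z) := by
  simp [dropL3, mulH, LinearMap.mul'_apply, smul_eq_mul]

end AuxLemmas

/-- If `γ ∈ Reg¹(H)` satisfies `γ(ab₁)b₂ = γ(ab₂)b₁` for all `a, b ∈ H`, then `γ` is lazy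
and neat. -/
theorem stmt17 {k : Type u} [Field k] {H : Type u} [Ring H] [HopfAlgebra k H]
    (γ γinv : H →ₗ[k] k) (hn : γ 1 = 1)
    (hinv1 : conv γ γinv = (Coalgebra.counit : H →ₗ[k] k))
    (hinv2 : conv γinv γ = (Coalgebra.counit : H →ₗ[k] k))
    (hcond : stmt17L γ = stmt17R γ) :
    IsLazy1 γ ∧ Neat1 γ := by
  -- pointwise form of the hypothesis followed by multiplication by `c` and `γ`
  have hpt : ∀ (a b : H) (rb : Coalgebra.Repr k b (H × H)) (c : H),
      ∑ j ∈ rb.index, γ (a * rb.left j) * γ (rb.right j * c)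
        = ∑ j ∈ rb.index, γ (a * rb.right j) * γ (rb.left j * c) := by
    intro a b rb c
    have h := LinearMap.congr_fun hcond (a ⊗ₜ[k] b)
    rw [stmt17L_apply γ a b rb, stmt17R_apply γ a b rb] at h
    have h2 := congrArg (γ ∘ₗ LinearMap.mulRight k c) h
    simpa [map_sum, smul_eq_mul, mul_comm] using h2
  have hpt0 : ∀ (b : H) (rb : Coalgebra.Repr k b (H × H)),
      ∑ j ∈ rb.index, γ (rb.left j) • rb.right j
        = ∑ j ∈ rb.index, γ (rb.right j) • rb.left j := by
    intro b rb
    have h := LinearMap.congr_fun hcond ((1 : H) ⊗ₜ[k] b)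
    rw [stmt17L_apply γ 1 b rb, stmt17R_apply γ 1 b rb] at h
    simpa [one_mul] using h
  constructor
  · -- laziness
    apply LinearMap.ext
    intro h
    obtain ⟨rh⟩ : Nonempty (Coalgebra.Repr k h (H × H)) := ⟨Coalgebra.Repr.arbitrary k h⟩
    have hl : ((TensorProduct.lid k H).toLinearMap ∘ₗ
        TensorProduct.map γ LinearMap.id ∘ₗ Coalgebra.comul) h
          = ∑ j ∈ rh.index, γ (rh.left j) • rh.right j := by
      simp only [LinearMap.comp_apply, ← rh.eq, map_sum, TensorProduct.map_tmul,
        LinearMap.id_apply, LinearEquiv.coe_coe, lid_tmul]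
    have hr : ((TensorProduct.rid k H).toLinearMap ∘ₗ
        TensorProduct.map LinearMap.id γ ∘ₗ Coalgebra.comul) h
          = ∑ j ∈ rh.index, γ (rh.right j) • rh.left j := by
      simp only [LinearMap.comp_apply, ← rh.eq, map_sum, TensorProduct.map_tmul,
        LinearMap.id_apply, LinearEquiv.coe_coe, rid_tmul]
    rw [hl, hr, hpt0 h rh]
  · -- neatness
    apply TensorProduct.ext'
    intro a x
    induction x using TensorProduct.induction_on with
    | zero => simp
    | add u v hu hv => simp [tmul_add, map_add, hu, hv]
    | tmul b c =>
      obtain ⟨ra⟩ : Nonempty (Coalgebra.Repr k a (H × H)) := ⟨Coalgebra.Repr.arbitrary k a⟩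
      obtain ⟨rb⟩ : Nonempty (Coalgebra.Repr k b (H × H)) := ⟨Coalgebra.Repr.arbitrary k b⟩
      obtain ⟨rc⟩ : Nonempty (Coalgebra.Repr k c (H × H)) := ⟨Coalgebra.Repr.arbitrary k c⟩
      rw [conv3_apply _ _ a b c ra rb rc, conv3_apply _ _ a b c ra rb rc]
      rw [Finset.sum_comm, Finset.sum_comm (s := ra.index)]
      have hL : ∀ j, ∑ i ∈ ra.index, ∑ l ∈ rc.index,
          (γ ∘ₗ mulH ∘ₗ TensorProduct.map LinearMap.id pr1)
              (ra.left i ⊗ₜ[k] (rb.left j ⊗ₜ[k] rc.left l)) *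
            (γ ∘ₗ mulH ∘ₗ dropL3)
              (ra.right i ⊗ₜ[k] (rb.right j ⊗ₜ[k] rc.right l))
          = γ (a * rb.left j) * γ (rb.right j * c) := by
        intro j
        rw [← key1 γ ra (rb.left j), ← key3 γ rc (rb.right j), Finset.sum_mul_sum]
        refine Finset.sum_congr rfl fun i _ => Finset.sum_congr rfl fun l _ => ?_
        rw [fval, gval]
        ring
      have hR : ∀ j, ∑ i ∈ ra.index, ∑ l ∈ rc.index,
          (γ ∘ₗ mulH ∘ₗ dropL3)
              (ra.left i ⊗ₜ[k] (rb.left j ⊗ₜ[k] rc.left l)) *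
            (γ ∘ₗ mulH ∘ₗ TensorProduct.map LinearMap.id pr1)
              (ra.right i ⊗ₜ[k] (rb.right j ⊗ₜ[k] rc.right l))
          = γ (a * rb.right j) * γ (rb.left j * c) := by
        intro j
        rw [← key2 γ ra (rb.right j), ← key4 γ rc (rb.left j), Finset.sum_mul_sum]
        refine Finset.sum_congr rfl fun i _ => Finset.sum_congr rfl fun l _ => ?_
        rw [fval, gval]
        ring
      rw [Finset.sum_congr rfl fun j _ => hL j, Finset.sum_congr rfl fun j _ => hR j]
      exact hpt a b rb c

end
end
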